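/- arXiv:1511.04087 — 5 statements merged into one kernel-verified Lean document; each statement's English description precedes it below -/
import Mathlib

section
/- There exists a constant C > 0 (depending only on u₀, r, and b) such that for all 0 ≤ t₀ ≤ t and all v ∈ B̄_r(u), one has e^{2t₀}·∫_t^∞ ‖Φ(t₀,s)‖·|b(v(s))| ds ≤ C·e^{−2t}; in particular e^{2t}·∫_t^∞ ‖Φ(t,s)‖·|b(v(s))| ds ≤ C·e^{−2t} for all t ≥ 0. Moreover, if r > 0 and 0 < |u₀| < r are sufficiently small, then T_u maps B̄_r(u) into B̄_r(u). -/
open Filter Topology MeasureTheory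

/-- `A₂ = d(d+2)`. -/
noncomputable def A2 (d : ℕ) : ℝ := (d : ℝ) * ((d : ℝ) + 2)

/-- `A₃ = (1/4)·d·(d+2)²·q²`. -/
noncomputable def A3 (d : ℕ) (q : ℝ) : ℝ := (1/4) * (d : ℝ) * ((d : ℝ) + 2)^2 * q^2

/-- The fundamental matrix `Φ(t,s)` of the linear system. -/
noncomputable def Phi (d : ℕ) (t s : ℝ) : Matrix (Fin 4) (Fin 4) ℝ :=
  !![1, (A2 d / (2 * (d : ℝ))) * (Real.exp (-2*(t-s)) - 1), 0, 0;
     0, Real.exp (-2*(t-s)), 0, 0;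
     0, 0, Real.exp (-2*(t-s)), 0;
     0, 0, 0, Real.exp (-2*(t-s))]

/-- The nonlinearity `b : ℝ⁴ → ℝ⁴`. -/
noncomputable def bfun (d : ℕ) (q : ℝ) (v : Fin 4 → ℝ) : Fin 4 → ℝ :=
  ![ -(v 0) * ((d : ℝ) * (v 0)^2 + (v 2)^2 - 2 * v 2) + (2 * A3 d q / (d : ℝ)) * (v 3)^2,
     -2 * v 1 * ((d : ℝ) * (v 0)^2 - v 0 + (v 2)^2 - 2 * v 2),
     -(v 2) * ((d : ℝ) * (v 0)^2 + (v 2)^2 - 3 * v 2) + (d : ℝ) * (v 0)^2 + A3 d q * (v 3)^2,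
     -(v 3) * ((d : ℝ) * (v 0)^2 - 2 * v 0 + (v 2)^2 - 3 * v 2) ]

/-- The nonlinear integral operator `T_u v(t) = u(t) - ∫_t^∞ Φ(t,s) b(v(s)) ds`. -/
noncomputable def Tmap (d : ℕ) (q : ℝ) (u v : ℝ → Fin 4 → ℝ) : ℝ → Fin 4 → ℝ :=
  fun t => u t - ∫ s in Set.Ioi t, (Phi d t s).mulVec (bfun d q (v s))

/-- Membership in the Banach space `𝕍`: continuity on `[0,∞)` and finiteness of the
weighted sup norm `sup_{t ≥ 0} e^{2t}|v(t)|`. -/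
def memV (v : ℝ → Fin 4 → ℝ) : Prop :=
  ContinuousOn v (Set.Ici 0) ∧ ∃ M : ℝ, ∀ t ≥ (0:ℝ), Real.exp (2*t) * ‖v t‖ ≤ M

/-- The weighted sup norm `‖v‖ = sup_{t ≥ 0} e^{2t}|v(t)|`. -/
noncomputable def Vnorm (v : ℝ → Fin 4 → ℝ) : ℝ :=
  ⨆ t : Set.Ici (0:ℝ), Real.exp (2 * (t : ℝ)) * ‖v (t : ℝ)‖

/-- Membership in the closed ball `B̄_r(u) = {v ∈ 𝕍 : ‖v - u‖ ≤ r}`. -/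
def inBall (r : ℝ) (u v : ℝ → Fin 4 → ℝ) : Prop :=
  memV v ∧ ∀ t ≥ (0:ℝ), Real.exp (2*t) * ‖v t - u t‖ ≤ r

/-- The initial vector `u₀ = ((A₂/(2d))y₀, y₀, z₀, w₀)`. -/
noncomputable def uZero (d : ℕ) (y0 z0 w0 : ℝ) : Fin 4 → ℝ :=
  ![A2 d / (2 * (d : ℝ)) * y0, y0, z0, w0]

/-- The solution `u(t) = Φ(t,0)u₀ = e^{-2t} u₀` of the linear system. -/
noncomputable def ufun (d : ℕ) (y0 z0 w0 : ℝ) : ℝ → Fin 4 → ℝ :=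
  fun t => Real.exp (-2*t) • uZero d y0 z0 w0

/-- An (entrywise sup) norm on 4×4 matrices. -/
noncomputable def matNorm (M : Matrix (Fin 4) (Fin 4) ℝ) : ℝ := ⨆ i, ⨆ j, |M i j|


open Set Real

noncomputable def cPhi (d : ℕ) : ℝ := 1 + A2 d / (2*(d:ℝ))
noncomputable def Kb (d : ℕ) (q R : ℝ) : ℝ := 2*((d:ℝ)+1)*R + (d:ℝ) + A3 d q + 8

lemma A3_nonneg (d : ℕ) (q : ℝ) : 0 ≤ A3 d q := by unfold A3; positivity

lemma Kb_nonneg (d : ℕ) (q : ℝ) {R : ℝ} (hR : 0 ≤ R) : 0 ≤ Kb d q R := by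
  have := A3_nonneg d q
  unfold Kb
  have : (0:ℝ) ≤ (d:ℝ) := Nat.cast_nonneg d
  nlinarith [A3_nonneg d q]

lemma continuous_bfun (d : ℕ) (q : ℝ) : Continuous (bfun d q) := by
  unfold bfun
  refine continuous_pi fun i => ?_
  fin_cases i <;> simp only [Fin.zero_eta, Fin.mk_one, Matrix.cons_val_zero, Matrix.cons_val_one,
    Matrix.head_cons, Fin.reduceFinMk, Matrix.cons_val_two, Matrix.tail_cons,
    Matrix.cons_val_three] <;> fun_prop

set_option maxHeartbeats 1000000 in

set_option maxHeartbeats 1000000 in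
lemma bfun_le (d : ℕ) (hd : 2 ≤ d) (q : ℝ) {R : ℝ} (hR : 0 ≤ R) (w : Fin 4 → ℝ)
    (hw : ‖w‖ ≤ R) : ‖bfun d q w‖ ≤ Kb d q R * ‖w‖^2 := by
  set n := ‖w‖ with hn_def
  clear_value n
  have hn : 0 ≤ n := hn_def ▸ norm_nonneg w
  have hD : (2:ℝ) ≤ (d:ℝ) := by exact_mod_cast hd
  have ha : 0 ≤ A3 d q := A3_nonneg d q
  have hwi : ∀ i, |w i| ≤ n := fun i => hn_def ▸ norm_le_pi_norm w i
  have hsq : ∀ i, (w i)^2 ≤ n^2 := fun i => by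
    have h := hwi i; nlinarith [abs_nonneg (w i), sq_abs (w i)]
  have hKb : 0 ≤ Kb d q R := Kb_nonneg d q hR
  -- generic bound on the quadratic factor
  have key : ∀ α β : ℝ, |α| ≤ 2 → |β| ≤ 3 →
      |(d:ℝ)*(w 0)^2 + α * w 0 + (w 2)^2 + β * w 2| ≤ ((d:ℝ)+1)*n^2 + 5*n := by
    intro α β hα hβ
    have h1 : |(d:ℝ)*(w 0)^2 + α * w 0 + (w 2)^2 + β * w 2| ≤
        |(d:ℝ)*(w 0)^2| + |α * w 0| + |(w 2)^2| + |β * w 2| :=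
      (abs_add_le _ _).trans (add_le_add_left
        ((abs_add_le _ _).trans (add_le_add_left (abs_add_le _ _) _)) _)
    have h2 : |(d:ℝ)*(w 0)^2| = (d:ℝ)*(w 0)^2 := abs_of_nonneg (by positivity)
    have h3 : |(w 2)^2| = (w 2)^2 := abs_of_nonneg (by positivity)
    have h4 : |α * w 0| ≤ 2 * n := by
      rw [abs_mul]
      exact mul_le_mul hα (hwi 0) (abs_nonneg _) (by norm_num)
    have h5 : |β * w 2| ≤ 3 * n := by
      rw [abs_mul]
      exact mul_le_mul hβ (hwi 2) (abs_nonneg _) (by norm_num)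
    nlinarith [hsq 0, hsq 2]
  have hcube : n * (((d:ℝ)+1)*n^2 + 5*n) ≤ (((d:ℝ)+1)*R + 5) * n^2 := by
    nlinarith [mul_le_mul_of_nonneg_left (mul_le_mul_of_nonneg_right hw (sq_nonneg n))
      (by linarith : (0:ℝ) ≤ (d:ℝ)+1)]
  have hsimp : ∀ P : (Fin 4 → ℝ) → Prop, P (bfun d q w) → P (bfun d q w) := fun _ h => h
  have hKbeq : Kb d q R = 2*((d:ℝ)+1)*R + (d:ℝ) + A3 d q + 8 := rfl
  have hnn1 : 0 ≤ ((d:ℝ)+1) * R * n^2 := by positivity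
  have hnn2 : 0 ≤ (d:ℝ) * n^2 := by positivity
  have hnn3 : 0 ≤ A3 d q * n^2 := mul_nonneg ha (sq_nonneg n)
  have c0 : |bfun d q w 0| ≤ Kb d q R * n^2 := by
    have hc0 : 0 ≤ 2 * A3 d q / (d:ℝ) := by positivity
    have hc1 : 2 * A3 d q / (d:ℝ) ≤ A3 d q := by
      rw [div_le_iff₀ (by linarith : (0:ℝ) < (d:ℝ))]
      nlinarith
    have e1 : bfun d q w 0 = -(w 0) * ((d:ℝ)*(w 0)^2 + (0:ℝ) * w 0 + (w 2)^2 + (-2) * w 2)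
        + (2 * A3 d q / (d:ℝ)) * (w 3)^2 := by
      simp only [bfun, Matrix.cons_val_zero]; ring
    rw [e1]
    have h6 : |(-(w 0)) * ((d:ℝ)*(w 0)^2 + (0:ℝ)*w 0 + (w 2)^2 + (-2)*w 2)|
        ≤ n * (((d:ℝ)+1)*n^2 + 5*n) := by
      rw [abs_mul, abs_neg]
      exact mul_le_mul (hwi 0) (key 0 (-2) (by norm_num) (by norm_num)) (abs_nonneg _) hn
    have h7 : |(2 * A3 d q / (d:ℝ)) * (w 3)^2| ≤ A3 d q * n^2 := by
      rw [abs_mul, abs_of_nonneg hc0, abs_of_nonneg (sq_nonneg _)]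
      exact mul_le_mul hc1 (hsq 3) (sq_nonneg _) ha
    refine (abs_add_le _ _).trans ?_
    rw [hKbeq]
    nlinarith [sq_nonneg n]
  have c1 : |bfun d q w 1| ≤ Kb d q R * n^2 := by
    have e1 : bfun d q w 1
        = (-2 * w 1) * ((d:ℝ)*(w 0)^2 + (-1:ℝ) * w 0 + (w 2)^2 + (-2) * w 2) := by
      simp only [bfun, Matrix.cons_val_one, Matrix.head_cons, Matrix.cons_val_zero]; ring
    rw [e1, abs_mul]
    have h6 : |(-2 : ℝ) * w 1| ≤ 2 * n := by
      rw [abs_mul]; simp only [abs_neg, abs_two]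
      exact mul_le_mul_of_nonneg_left (hwi 1) (by norm_num)
    have h8 : |(-2:ℝ) * w 1| * |(d:ℝ)*(w 0)^2 + (-1:ℝ)*w 0 + (w 2)^2 + (-2)*w 2|
        ≤ (2*n) * (((d:ℝ)+1)*n^2 + 5*n) :=
      mul_le_mul h6 (key (-1) (-2) (by norm_num) (by norm_num)) (abs_nonneg _) (by linarith)
    rw [hKbeq]
    nlinarith [sq_nonneg n, mul_nonneg (by linarith : (0:ℝ) ≤ (d:ℝ) - 2) (sq_nonneg n)]
  have c2 : |bfun d q w 2| ≤ Kb d q R * n^2 := by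
    have e1 : bfun d q w 2 = -(w 2) * ((d:ℝ)*(w 0)^2 + (0:ℝ) * w 0 + (w 2)^2 + (-3) * w 2)
        + ((d:ℝ) * (w 0)^2 + A3 d q * (w 3)^2) := by
      simp only [bfun, Matrix.cons_val_two, Matrix.tail_cons, Matrix.head_cons]; ring
    rw [e1]
    have h6 : |(-(w 2)) * ((d:ℝ)*(w 0)^2 + (0:ℝ)*w 0 + (w 2)^2 + (-3)*w 2)|
        ≤ n * (((d:ℝ)+1)*n^2 + 5*n) := by
      rw [abs_mul, abs_neg]
      exact mul_le_mul (hwi 2) (key 0 (-3) (by norm_num) (by norm_num)) (abs_nonneg _) hn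
    have h7 : |(d:ℝ) * (w 0)^2 + A3 d q * (w 3)^2| ≤ (d:ℝ) * n^2 + A3 d q * n^2 := by
      rw [abs_of_nonneg (by positivity)]
      have := hsq 0; have := hsq 3
      nlinarith
    refine (abs_add_le _ _).trans ?_
    rw [hKbeq]
    nlinarith [sq_nonneg n]
  have c3 : |bfun d q w 3| ≤ Kb d q R * n^2 := by
    have e1 : bfun d q w 3
        = (-(w 3)) * ((d:ℝ)*(w 0)^2 + (-2:ℝ) * w 0 + (w 2)^2 + (-3) * w 2) := by
      simp only [bfun, Matrix.cons_val_three, Matrix.tail_cons, Matrix.head_cons]; ring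
    rw [e1, abs_mul, abs_neg]
    have h8 : |w 3| * |(d:ℝ)*(w 0)^2 + (-2:ℝ)*w 0 + (w 2)^2 + (-3)*w 2|
        ≤ n * (((d:ℝ)+1)*n^2 + 5*n) :=
      mul_le_mul (hwi 3) (key (-2) (-3) (by norm_num) (by norm_num)) (abs_nonneg _) hn
    rw [hKbeq]
    nlinarith [sq_nonneg n]
  rw [pi_norm_le_iff_of_nonneg (by positivity)]
  intro i
  fin_cases i
  · exact c0
  · exact c1
  · exact c2
  · exact c3

lemma iSup_fin4 (f : Fin 4 → ℝ) : (⨆ i, f i) = max (max (f 0) (f 1)) (max (f 2) (f 3)) := by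
  apply le_antisymm
  · exact ciSup_le fun i => by fin_cases i <;> simp [le_max_iff, le_refl]
  · have h : ∀ i, f i ≤ ⨆ i, f i := fun i => le_ciSup (Set.Finite.bddAbove (Set.finite_range f)) i
    simp only [max_le_iff]
    exact ⟨⟨h 0, h 1⟩, h 2, h 3⟩

lemma matNorm_eq (M : Matrix (Fin 4) (Fin 4) ℝ) :
    matNorm M = max (max (max (max (|M 0 0|) (|M 0 1|)) (max (|M 0 2|) (|M 0 3|)))
                         (max (max (|M 1 0|) (|M 1 1|)) (max (|M 1 2|) (|M 1 3|))))
                    (max (max (max (|M 2 0|) (|M 2 1|)) (max (|M 2 2|) (|M 2 3|)))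
                         (max (max (|M 3 0|) (|M 3 1|)) (max (|M 3 2|) (|M 3 3|)))) := by
  unfold matNorm
  rw [iSup_fin4 (fun i => ⨆ j, |M i j|)]
  simp only [iSup_fin4]

lemma matNorm_nonneg (M : Matrix (Fin 4) (Fin 4) ℝ) : 0 ≤ matNorm M := by
  rw [matNorm_eq]
  have := abs_nonneg (M 0 0)
  simp only [le_max_iff]
  tauto

lemma entry_le_matNorm (M : Matrix (Fin 4) (Fin 4) ℝ) (i j : Fin 4) : |M i j| ≤ matNorm M := by
  have h1 : |M i j| ≤ ⨆ j', |M i j'| :=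
    le_ciSup (f := fun j' => |M i j'|) (Set.Finite.bddAbove (Set.finite_range _)) j
  have h2 : (⨆ j', |M i j'|) ≤ ⨆ i', ⨆ j', |M i' j'| :=
    le_ciSup (f := fun i' => ⨆ j', |M i' j'|) (Set.Finite.bddAbove (Set.finite_range _)) i
  exact h1.trans h2

lemma mulVec_norm_le (M : Matrix (Fin 4) (Fin 4) ℝ) (x : Fin 4 → ℝ) :
    ‖M.mulVec x‖ ≤ 4 * matNorm M * ‖x‖ := by
  have h0 := matNorm_nonneg M
  rw [pi_norm_le_iff_of_nonneg (by positivity)]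
  intro i
  have hj : ∀ j, |M i j * x j| ≤ matNorm M * ‖x‖ := fun j => by
    rw [abs_mul]
    exact mul_le_mul (entry_le_matNorm M i j) (norm_le_pi_norm x j) (abs_nonneg _) h0
  simp only [Matrix.mulVec, dotProduct, Fin.sum_univ_four, Real.norm_eq_abs]
  have t1 := abs_add_le (M i 0 * x 0 + M i 1 * x 1 + M i 2 * x 2) (M i 3 * x 3)
  have t2 := abs_add_le (M i 0 * x 0 + M i 1 * x 1) (M i 2 * x 2)
  have t3 := abs_add_le (M i 0 * x 0) (M i 1 * x 1)
  linarith [hj 0, hj 1, hj 2, hj 3]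

lemma cPhi_pos (d : ℕ) (hd : 2 ≤ d) : 0 < cPhi d := by
  unfold cPhi A2
  have : (0:ℝ) ≤ (d:ℝ) := Nat.cast_nonneg d
  positivity

lemma A2div_nonneg (d : ℕ) : 0 ≤ A2 d / (2*(d:ℝ)) := by
  unfold A2
  positivity

lemma matNorm_Phi_le (d : ℕ) (hd : 2 ≤ d) {t0 s : ℝ} (hs : t0 ≤ s) :
    matNorm (Phi d t0 s) ≤ cPhi d * Real.exp (-2*(t0-s)) := by
  have hE1 : 1 ≤ Real.exp (-2*(t0-s)) := by
    rw [← Real.exp_zero]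
    exact Real.exp_le_exp.2 (by linarith)
  have hA := A2div_nonneg d
  have hEpos := Real.exp_pos (-2*(t0-s))
  rw [matNorm_eq]
  simp only [Phi, Matrix.cons_val', Matrix.cons_val_zero, Matrix.cons_val_one, Matrix.head_cons,
    Matrix.empty_val', Matrix.cons_val_fin_one, Matrix.head_fin_const, Matrix.cons_val_two,
    Matrix.tail_cons, Matrix.cons_val_three, Matrix.of_apply]
  generalize hEg : Real.exp (-2*(t0-s)) = E at *
  have hcE : cPhi d * E = E + (A2 d / (2*(d:ℝ))) * E := by unfold cPhi; ring
  have h1 : |(1:ℝ)| ≤ cPhi d * E := by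
    rw [abs_one, hcE]; nlinarith
  have h0 : |(0:ℝ)| ≤ cPhi d * E := by
    rw [abs_zero, hcE]; nlinarith
  have hEE : |E| ≤ cPhi d * E := by
    rw [abs_of_pos hEpos, hcE]; nlinarith
  have h12 : |(A2 d / (2*(d:ℝ))) * (E - 1)| ≤ cPhi d * E := by
    rw [abs_of_nonneg (mul_nonneg hA (by linarith)), hcE]; nlinarith
  simp only [max_le_iff]
  refine ⟨⟨⟨⟨h1, ?_⟩, h0, h0⟩, ⟨h0, hEE⟩, h0, h0⟩, ⟨⟨h0, h0⟩, hEE, h0⟩, ⟨h0, h0⟩, h0, hEE⟩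
  · convert h12 using 2

lemma integral_exp_neg_two (t : ℝ) :
    (∫ s in Set.Ioi t, Real.exp (-2*s)) = Real.exp (-2*t) / 2 := by
  have h := integral_comp_mul_left_Ioi (fun x => Real.exp (-x)) t (by norm_num : (0:ℝ) < 2)
  simp only [smul_eq_mul] at h
  rw [integral_exp_neg_Ioi] at h
  calc (∫ s in Set.Ioi t, Real.exp (-2*s)) = ∫ x in Set.Ioi t, Real.exp (-(2*x)) := by
        simp only [neg_mul]
    _ = 2⁻¹ * Real.exp (-(2*t)) := h
    _ = Real.exp (-2*t) / 2 := by rw [neg_mul]; ring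

lemma int_exp_bound (t CC : ℝ) (f : ℝ → ℝ) (hnn : ∀ s, 0 ≤ f s)
    (hb : ∀ s ∈ Set.Ioi t, f s ≤ CC * Real.exp (-2*s)) :
    (∫ s in Set.Ioi t, f s) ≤ CC * Real.exp (-2*t) / 2 := by
  have hint : Integrable (fun s => CC * Real.exp (-2*s)) (volume.restrict (Set.Ioi t)) :=
    (exp_neg_integrableOn_Ioi t (by norm_num : (0:ℝ) < 2)).const_mul CC
  have h1 : (∫ s in Set.Ioi t, f s) ≤ ∫ s in Set.Ioi t, CC * Real.exp (-2*s) := by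
    refine integral_mono_of_nonneg (ae_of_all _ hnn) hint ?_
    exact (ae_restrict_iff' measurableSet_Ioi).2 (ae_of_all _ hb)
  refine h1.trans ?_
  rw [MeasureTheory.integral_const_mul, integral_exp_neg_two]
  ring_nf
  exact le_refl _

lemma exp_cancel (s : ℝ) : Real.exp (-2*s) * Real.exp (2*s) = 1 := by
  rw [← Real.exp_add]
  norm_num

lemma norm_ufun (d : ℕ) (y0 z0 w0 : ℝ) (t : ℝ) :
    ‖ufun d y0 z0 w0 t‖ = Real.exp (-2*t) * ‖uZero d y0 z0 w0‖ := by
  unfold ufun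
  rw [norm_smul, Real.norm_eq_abs, abs_of_pos (Real.exp_pos _)]

/-- the basic decay bound for elements of the ball -/
lemma ball_decay {d : ℕ} {y0 z0 w0 r : ℝ} {v : ℝ → Fin 4 → ℝ}
    (hv : inBall r (ufun d y0 z0 w0) v) {s : ℝ} (hs : 0 ≤ s) :
    ‖v s‖ ≤ (r + ‖uZero d y0 z0 w0‖) * Real.exp (-2*s) := by
  have h1 := hv.2 s hs
  have h2 : ‖v s - ufun d y0 z0 w0 s‖ ≤ r * Real.exp (-2*s) := by
    have := mul_le_mul_of_nonneg_left h1 (Real.exp_pos (-2*s)).le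
    rw [← mul_assoc, exp_cancel, one_mul] at this
    linarith [this]
  calc ‖v s‖ ≤ ‖v s - ufun d y0 z0 w0 s‖ + ‖ufun d y0 z0 w0 s‖ := by
        have := norm_add_le (v s - ufun d y0 z0 w0 s) (ufun d y0 z0 w0 s)
        simpa using this
    _ ≤ r * Real.exp (-2*s) + Real.exp (-2*s) * ‖uZero d y0 z0 w0‖ := by
        rw [norm_ufun]; exact add_le_add h2 (le_refl _)
    _ = (r + ‖uZero d y0 z0 w0‖) * Real.exp (-2*s) := by ring

/-- pointwise bound on the integrand -/
lemma ptw_bound (d : ℕ) (hd : 2 ≤ d) (q : ℝ) {R' t0 s : ℝ} (h0 : 0 ≤ t0) (hs : t0 ≤ s)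
    (hR' : 0 ≤ R') (w : Fin 4 → ℝ) (hw : ‖w‖ ≤ R' * Real.exp (-2*s)) :
    matNorm (Phi d t0 s) * ‖bfun d q w‖
      ≤ (cPhi d * Kb d q R' * R'^2 * Real.exp (-2*t0)) * Real.exp (-2*s) := by
  have hs0 : 0 ≤ s := le_trans h0 hs
  have hexp1 : Real.exp (-2*s) ≤ 1 := by
    rw [← Real.exp_zero]; exact Real.exp_le_exp.2 (by linarith)
  have hwR : ‖w‖ ≤ R' := hw.trans (by nlinarith [Real.exp_pos (-2*s)])
  have hb1 : ‖bfun d q w‖ ≤ Kb d q R' * ‖w‖^2 := bfun_le d hd q hR' w hwR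
  have hKb := Kb_nonneg d q hR'
  have hb2 : ‖bfun d q w‖ ≤ Kb d q R' * (R' * Real.exp (-2*s))^2 := by
    refine hb1.trans (mul_le_mul_of_nonneg_left ?_ hKb)
    exact pow_le_pow_left₀ (norm_nonneg _) hw 2
  have hm := matNorm_Phi_le d hd hs
  have hmn := matNorm_nonneg (Phi d t0 s)
  have step : matNorm (Phi d t0 s) * ‖bfun d q w‖
      ≤ (cPhi d * Real.exp (-2*(t0-s))) * (Kb d q R' * (R' * Real.exp (-2*s))^2) :=
    mul_le_mul hm hb2 (norm_nonneg _) (mul_nonneg (cPhi_pos d hd).le (Real.exp_pos _).le)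
  refine step.trans (le_of_eq ?_)
  have hexp : Real.exp (-2*(t0-s)) * Real.exp (-2*s) ^ 2
      = Real.exp (-2*t0) * Real.exp (-2*s) := by
    rw [sq, ← Real.exp_add, ← Real.exp_add, ← Real.exp_add]
    congr 1; ring
  linear_combination cPhi d * Kb d q R' * R'^2 * hexp

lemma part1_bound (d : ℕ) (hd : 2 ≤ d) (q : ℝ) {y0 z0 w0 r : ℝ} (hr : 0 < r)
    {t0 t : ℝ} (h0 : 0 ≤ t0) (ht : t0 ≤ t) {v : ℝ → Fin 4 → ℝ}
    (hv : inBall r (ufun d y0 z0 w0) v) :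
    Real.exp (2*t0) * ∫ s in Set.Ioi t, matNorm (Phi d t0 s) * ‖bfun d q (v s)‖
      ≤ (cPhi d * Kb d q (r + ‖uZero d y0 z0 w0‖) * (r + ‖uZero d y0 z0 w0‖)^2 / 2)
        * Real.exp (-2*t) := by
  set R' := r + ‖uZero d y0 z0 w0‖ with hR'def
  have hR' : 0 ≤ R' := by positivity
  have hI : (∫ s in Set.Ioi t, matNorm (Phi d t0 s) * ‖bfun d q (v s)‖)
      ≤ (cPhi d * Kb d q R' * R'^2 * Real.exp (-2*t0)) * Real.exp (-2*t) / 2 := by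
    refine int_exp_bound t _ _ (fun s => mul_nonneg (matNorm_nonneg _) (norm_nonneg _)) ?_
    intro s hs
    have hst : t0 ≤ s := le_trans ht (le_of_lt hs)
    exact ptw_bound d hd q h0 hst hR' (v s) (ball_decay hv (le_trans h0 hst))
  have h2 := mul_le_mul_of_nonneg_left hI (Real.exp_pos (2*t0)).le
  refine h2.trans (le_of_eq ?_)
  have hc := exp_cancel t0
  linear_combination (cPhi d * Kb d q R' * R'^2 * Real.exp (-2*t) / 2) * hc

lemma Tmap_diff_bound (d : ℕ) (hd : 2 ≤ d) (q : ℝ) {y0 z0 w0 r : ℝ}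
    {v : ℝ → Fin 4 → ℝ} (hv : inBall r (ufun d y0 z0 w0) v) {t : ℝ} (ht : 0 ≤ t) :
    Real.exp (2*t) * ‖(∫ s in Set.Ioi t, (Phi d t s).mulVec (bfun d q (v s)))‖
      ≤ 2 * cPhi d * Kb d q (r + ‖uZero d y0 z0 w0‖) * (r + ‖uZero d y0 z0 w0‖)^2
        * Real.exp (-2*t) := by
  have hr0 : 0 ≤ r := le_trans (by positivity) (hv.2 0 le_rfl)
  set R' := r + ‖uZero d y0 z0 w0‖ with hR'def
  have hR' : 0 ≤ R' := add_nonneg hr0 (norm_nonneg _)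
  have h1 : ‖(∫ s in Set.Ioi t, (Phi d t s).mulVec (bfun d q (v s)))‖
      ≤ ∫ s in Set.Ioi t, ‖(Phi d t s).mulVec (bfun d q (v s))‖ :=
    norm_integral_le_integral_norm _
  have h2 : (∫ s in Set.Ioi t, ‖(Phi d t s).mulVec (bfun d q (v s))‖)
      ≤ (4 * (cPhi d * Kb d q R' * R'^2 * Real.exp (-2*t))) * Real.exp (-2*t) / 2 := by
    refine int_exp_bound t _ _ (fun s => norm_nonneg _) ?_
    intro s hs
    have hst : t ≤ s := le_of_lt hs
    have hmv := mulVec_norm_le (Phi d t s) (bfun d q (v s))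
    have hp := ptw_bound d hd q ht hst hR' (v s) (ball_decay hv (le_trans ht hst))
    calc ‖(Phi d t s).mulVec (bfun d q (v s))‖
        ≤ 4 * matNorm (Phi d t s) * ‖bfun d q (v s)‖ := hmv
      _ = 4 * (matNorm (Phi d t s) * ‖bfun d q (v s)‖) := by ring
      _ ≤ 4 * ((cPhi d * Kb d q R' * R'^2 * Real.exp (-2*t)) * Real.exp (-2*s)) := by
          linarith
      _ = (4 * (cPhi d * Kb d q R' * R'^2 * Real.exp (-2*t))) * Real.exp (-2*s) := by ring
  have h3 := mul_le_mul_of_nonneg_left (h1.trans h2) (Real.exp_pos (2*t)).le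
  refine h3.trans (le_of_eq ?_)
  have hc := exp_cancel t
  linear_combination (2 * cPhi d * Kb d q R' * R'^2 * Real.exp (-2*t)) * hc

noncomputable def Qmat (d : ℕ) : Matrix (Fin 4) (Fin 4) ℝ :=
  !![0, A2 d / (2*(d:ℝ)), 0, 0; 0, 1, 0, 0; 0, 0, 1, 0; 0, 0, 0, 1]

noncomputable def Pmat (d : ℕ) : Matrix (Fin 4) (Fin 4) ℝ :=
  !![1, -(A2 d / (2*(d:ℝ))), 0, 0; 0, 0, 0, 0; 0, 0, 0, 0; 0, 0, 0, 0]

lemma Phi_decomp (d : ℕ) (t s : ℝ) (x : Fin 4 → ℝ) :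
    (Phi d t s).mulVec x
      = Real.exp (-2*t) • (Real.exp (2*s) • (Qmat d).mulVec x) + (Pmat d).mulVec x := by
  have he : Real.exp (-(2*(t-s))) = Real.exp (-(2*t)) * Real.exp (2*s) := by
    rw [← Real.exp_add]; congr 1; ring
  funext i
  fin_cases i <;>
    simp [Phi, Qmat, Pmat, Matrix.mulVec, dotProduct, Fin.sum_univ_four,
      Pi.add_apply, Pi.smul_apply, smul_eq_mul] <;> rw [he] <;> ring

lemma weight_integrable {g : ℝ → Fin 4 → ℝ} (hgc : ContinuousOn g (Set.Ici 0)) {K : ℝ}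
    (hg : ∀ s, 0 ≤ s → ‖g s‖ ≤ K * Real.exp (-2*s)) :
    IntegrableOn g (Set.Ioi 0) := by
  refine Integrable.mono' ((exp_neg_integrableOn_Ioi 0
    (by norm_num : (0:ℝ) < 2)).const_mul K) ?_ ?_
  · exact (hgc.mono Set.Ioi_subset_Ici_self).aestronglyMeasurable measurableSet_Ioi
  · exact (ae_restrict_iff' measurableSet_Ioi).2 (ae_of_all _ fun s hs => hg s (le_of_lt hs))

lemma tail_integral_continuousOn {f : ℝ → Fin 4 → ℝ} (L : ℝ) (hL : 0 ≤ L)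
    (hint : IntegrableOn f (Set.Ioi 0)) (hbd : ∀ s, 0 < s → ‖f s‖ ≤ L) :
    ContinuousOn (fun t => ∫ s in Set.Ioi t, f s) (Set.Ici 0) := by
  have key : ∀ t₁ t₂ : ℝ, 0 ≤ t₁ → t₁ ≤ t₂ →
      ‖(∫ s in Set.Ioi t₁, f s) - ∫ s in Set.Ioi t₂, f s‖ ≤ L * (t₂ - t₁) := by
    intro t₁ t₂ h1 h12
    have hi1 : IntegrableOn f (Set.Ioc t₁ t₂) :=
      hint.mono_set (fun x hx => h1.trans_lt hx.1)
    have hi2 : IntegrableOn f (Set.Ioi t₂) :=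
      hint.mono_set (Set.Ioi_subset_Ioi (h1.trans h12))
    have hsplit : (∫ s in Set.Ioi t₁, f s)
        = (∫ s in Set.Ioc t₁ t₂, f s) + ∫ s in Set.Ioi t₂, f s := by
      rw [← setIntegral_union (Set.Ioc_disjoint_Ioi le_rfl) measurableSet_Ioi hi1 hi2,
        Set.Ioc_union_Ioi_eq_Ioi h12]
    rw [hsplit, add_sub_cancel_right]
    have hb : ‖∫ s in Set.Ioc t₁ t₂, f s‖ ≤ L * (volume (Set.Ioc t₁ t₂)).toReal := by
      refine norm_setIntegral_le_of_norm_le_const_ae measure_Ioc_lt_top ?_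
      exact (ae_restrict_iff' measurableSet_Ioc).2
        (ae_of_all _ fun s hs => hbd s (h1.trans_lt hs.1))
    rwa [Real.volume_Ioc, ENNReal.toReal_ofReal (by linarith)] at hb
  have hlip : LipschitzOnWith (Real.toNNReal L) (fun t => ∫ s in Set.Ioi t, f s)
      (Set.Ici 0) := by
    apply LipschitzOnWith.of_dist_le_mul
    intro x hx y hy
    have hLc : (Real.toNNReal L : ℝ) = L := Real.coe_toNNReal L hL
    rw [dist_eq_norm, Real.dist_eq, hLc]
    rcases le_total x y with h | h
    · rw [abs_of_nonpos (by linarith)]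
      exact (key x y hx h).trans (by ring_nf; exact le_refl _)
    · rw [abs_of_nonneg (by linarith), ← norm_neg]
      have := key y x hy h
      simpa [neg_sub] using this
  exact hlip.continuousOn

set_option maxHeartbeats 1000000 in
lemma Tmap_continuousOn (d : ℕ) (hd : 2 ≤ d) (q : ℝ) {y0 z0 w0 r : ℝ}
    {v : ℝ → Fin 4 → ℝ} (hv : inBall r (ufun d y0 z0 w0) v) :
    ContinuousOn (Tmap d q (ufun d y0 z0 w0) v) (Set.Ici 0) := by
  have hr0 : 0 ≤ r := le_trans (by positivity) (hv.2 0 le_rfl)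
  set R' := r + ‖uZero d y0 z0 w0‖ with hR'def
  have hR' : 0 ≤ R' := add_nonneg hr0 (norm_nonneg _)
  have hKb := Kb_nonneg d q hR'
  have hD : (2:ℝ) ≤ (d:ℝ) := by exact_mod_cast hd
  -- decay of s ↦ bfun (v s)
  have hbb : ∀ s, 0 ≤ s → ‖bfun d q (v s)‖
      ≤ (Kb d q R' * R'^2) * (Real.exp (-2*s))^2 := by
    intro s hs
    have h1 := ball_decay hv hs
    have hexp1 : Real.exp (-2*s) ≤ 1 := by
      rw [← Real.exp_zero]; exact Real.exp_le_exp.2 (by linarith)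
    have hvR : ‖v s‖ ≤ R' := h1.trans (by nlinarith [Real.exp_pos (-2*s)])
    have hb1 := bfun_le d hd q hR' (v s) hvR
    have hb2 : ‖v s‖^2 ≤ (R' * Real.exp (-2*s))^2 :=
      pow_le_pow_left₀ (norm_nonneg _) h1 2
    calc ‖bfun d q (v s)‖ ≤ Kb d q R' * ‖v s‖^2 := hb1
      _ ≤ Kb d q R' * (R' * Real.exp (-2*s))^2 := mul_le_mul_of_nonneg_left hb2 hKb
      _ = (Kb d q R' * R'^2) * (Real.exp (-2*s))^2 := by ring
  set f₁ : ℝ → Fin 4 → ℝ := fun s => Real.exp (2*s) • (Qmat d).mulVec (bfun d q (v s))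
    with hf₁def
  set f₂ : ℝ → Fin 4 → ℝ := fun s => (Pmat d).mulVec (bfun d q (v s)) with hf₂def
  have hbc : ContinuousOn (fun s => bfun d q (v s)) (Set.Ici 0) :=
    (continuous_bfun d q).comp_continuousOn hv.1.1
  have hqc : Continuous fun x : Fin 4 → ℝ => (Qmat d).mulVec x := by
    have h := LinearMap.continuous_of_finiteDimensional ((Qmat d).mulVecLin)
    have he : (fun x : Fin 4 → ℝ => (Qmat d).mulVec x) = ⇑((Qmat d).mulVecLin) := by
      funext x; simp [Matrix.mulVecLin_apply]
    rw [he]; exact h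
  have hpc : Continuous fun x : Fin 4 → ℝ => (Pmat d).mulVec x := by
    have h := LinearMap.continuous_of_finiteDimensional ((Pmat d).mulVecLin)
    have he : (fun x : Fin 4 → ℝ => (Pmat d).mulVec x) = ⇑((Pmat d).mulVecLin) := by
      funext x; simp [Matrix.mulVecLin_apply]
    rw [he]; exact h
  have hf₁c : ContinuousOn f₁ (Set.Ici 0) := by
    refine ContinuousOn.fun_smul ?_ (hqc.comp_continuousOn hbc)
    exact (Real.continuous_exp.comp (by fun_prop)).continuousOn
  have hf₂c : ContinuousOn f₂ (Set.Ici 0) := hpc.comp_continuousOn hbc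
  set L₁ : ℝ := 4 * matNorm (Qmat d) * (Kb d q R' * R'^2) with hL₁def
  set L₂ : ℝ := 4 * matNorm (Pmat d) * (Kb d q R' * R'^2) with hL₂def
  have hL₁ : 0 ≤ L₁ := by
    have := matNorm_nonneg (Qmat d); positivity
  have hL₂ : 0 ≤ L₂ := by
    have := matNorm_nonneg (Pmat d); positivity
  have hexpsq : ∀ s : ℝ, Real.exp (2*s) * (Real.exp (-2*s))^2 = Real.exp (-2*s) := by
    intro s
    rw [sq, ← Real.exp_add, ← Real.exp_add]; congr 1; ring
  have hf₁b : ∀ s, 0 ≤ s → ‖f₁ s‖ ≤ L₁ * Real.exp (-2*s) := by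
    intro s hs
    have h1 : ‖f₁ s‖ = Real.exp (2*s) * ‖(Qmat d).mulVec (bfun d q (v s))‖ := by
      rw [hf₁def]
      simp only [norm_smul, Real.norm_eq_abs, abs_of_pos (Real.exp_pos _)]
    rw [h1]
    have h2 : ‖(Qmat d).mulVec (bfun d q (v s))‖
        ≤ 4 * matNorm (Qmat d) * ((Kb d q R' * R'^2) * (Real.exp (-2*s))^2) := by
      refine (mulVec_norm_le _ _).trans ?_
      exact mul_le_mul_of_nonneg_left (hbb s hs)
        (by have := matNorm_nonneg (Qmat d); positivity)
    calc Real.exp (2*s) * ‖(Qmat d).mulVec (bfun d q (v s))‖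
        ≤ Real.exp (2*s) * (4 * matNorm (Qmat d) * ((Kb d q R' * R'^2) * (Real.exp (-2*s))^2)) :=
          mul_le_mul_of_nonneg_left h2 (Real.exp_pos _).le
      _ = L₁ * (Real.exp (2*s) * (Real.exp (-2*s))^2) := by rw [hL₁def]; ring
      _ = L₁ * Real.exp (-2*s) := by rw [hexpsq]
  have hf₂b : ∀ s, 0 ≤ s → ‖f₂ s‖ ≤ L₂ * Real.exp (-2*s) := by
    intro s hs
    have h2 : ‖f₂ s‖ ≤ 4 * matNorm (Pmat d) * ((Kb d q R' * R'^2) * (Real.exp (-2*s))^2) := by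
      refine (mulVec_norm_le _ _).trans ?_
      exact mul_le_mul_of_nonneg_left (hbb s hs)
        (by have := matNorm_nonneg (Pmat d); positivity)
    have h3 : (Real.exp (-2*s))^2 ≤ Real.exp (-2*s) := by
      have he1 : Real.exp (-2*s) ≤ 1 := by
        rw [← Real.exp_zero]; exact Real.exp_le_exp.2 (by linarith)
      nlinarith [Real.exp_pos (-2*s)]
    refine h2.trans ?_
    rw [hL₂def]
    have := matNorm_nonneg (Pmat d)
    nlinarith [hKb, sq_nonneg R', mul_nonneg (mul_nonneg (by linarith : (0:ℝ) ≤ 4 * matNorm (Pmat d)) (mul_nonneg hKb (sq_nonneg R'))) (Real.exp_pos (-2*s)).le]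
  have hf₁int : IntegrableOn f₁ (Set.Ioi 0) := weight_integrable hf₁c hf₁b
  have hf₂int : IntegrableOn f₂ (Set.Ioi 0) := weight_integrable hf₂c hf₂b
  have hexple1 : ∀ s : ℝ, 0 ≤ s → Real.exp (-2*s) ≤ 1 := fun s hs => by
    rw [← Real.exp_zero]; exact Real.exp_le_exp.2 (by linarith)
  have hF : ContinuousOn (fun t => ∫ s in Set.Ioi t, f₁ s) (Set.Ici 0) := by
    refine tail_integral_continuousOn L₁ hL₁ hf₁int ?_
    intro s hs
    refine (hf₁b s hs.le).trans ?_
    nlinarith [hexple1 s hs.le, Real.exp_pos (-2*s)]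
  have hG : ContinuousOn (fun t => ∫ s in Set.Ioi t, f₂ s) (Set.Ici 0) := by
    refine tail_integral_continuousOn L₂ hL₂ hf₂int ?_
    intro s hs
    refine (hf₂b s hs.le).trans ?_
    nlinarith [hexple1 s hs.le, Real.exp_pos (-2*s)]
  have hTm : ∀ t ∈ Set.Ici (0:ℝ), Tmap d q (ufun d y0 z0 w0) v t
      = ufun d y0 z0 w0 t
        - (Real.exp (-2*t) • (∫ s in Set.Ioi t, f₁ s) + ∫ s in Set.Ioi t, f₂ s) := by
    intro t ht
    unfold Tmap
    congr 1
    have h1 : ∀ s : ℝ, (Phi d t s).mulVec (bfun d q (v s))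
        = Real.exp (-2*t) • f₁ s + f₂ s := fun s => Phi_decomp d t s _
    simp only [h1]
    have hi1 : Integrable (fun s => Real.exp (-2*t) • f₁ s) (volume.restrict (Set.Ioi t)) :=
      (hf₁int.mono_set (Set.Ioi_subset_Ioi ht)).smul (Real.exp (-2*t))
    have hi2 : Integrable f₂ (volume.restrict (Set.Ioi t)) :=
      hf₂int.mono_set (Set.Ioi_subset_Ioi ht)
    rw [integral_add hi1 hi2, integral_smul]
  refine ContinuousOn.congr ?_ hTm
  have hu : Continuous (ufun d y0 z0 w0) := by
    unfold ufun
    exact (Real.continuous_exp.comp (by fun_prop)).smul continuous_const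
  have hexp : Continuous fun t : ℝ => Real.exp (-2*t) :=
    Real.continuous_exp.comp (by fun_prop)
  exact hu.continuousOn.sub ((hexp.continuousOn.smul hF).add hG)

set_option maxHeartbeats 1000000 in
/-- There is a constant `C > 0` (depending only on `u₀`, `r` and `b`) with
`e^{2t₀} ∫_t^∞ ‖Φ(t₀,s)‖·|b(v(s))| ds ≤ C e^{-2t}` for all `0 ≤ t₀ ≤ t` and `v ∈ B̄_r(u)`;
in particular `e^{2t} ∫_t^∞ ‖Φ(t,s)‖·|b(v(s))| ds ≤ C e^{-2t}` for `t ≥ 0`.  Moreover, if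
`r` and `0 < |u₀| < r` are sufficiently small, `T_u` maps `B̄_r(u)` into itself. -/
theorem stmt1 (d : ℕ) (hd : 2 ≤ d) (q : ℝ) :
    (∀ y0 z0 w0 r : ℝ, 0 < r →
      ∃ C > (0:ℝ),
        (∀ t0 t : ℝ, 0 ≤ t0 → t0 ≤ t →
          ∀ v, inBall r (ufun d y0 z0 w0) v →
            Real.exp (2*t0) * ∫ s in Set.Ioi t, matNorm (Phi d t0 s) * ‖bfun d q (v s)‖
              ≤ C * Real.exp (-2*t)) ∧
        (∀ t : ℝ, 0 ≤ t →
          ∀ v, inBall r (ufun d y0 z0 w0) v →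
            Real.exp (2*t) * ∫ s in Set.Ioi t, matNorm (Phi d t s) * ‖bfun d q (v s)‖
              ≤ C * Real.exp (-2*t))) ∧
    (∃ ε > (0:ℝ), ∀ r : ℝ, 0 < r → r < ε → ∀ y0 z0 w0 : ℝ,
      0 < ‖uZero d y0 z0 w0‖ → ‖uZero d y0 z0 w0‖ < r →
      ∀ v, inBall r (ufun d y0 z0 w0) v →
        inBall r (ufun d y0 z0 w0) (Tmap d q (ufun d y0 z0 w0) v)) := by
  have hD : (2:ℝ) ≤ (d:ℝ) := by exact_mod_cast hd
  have hcp := cPhi_pos d hd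
  constructor
  · -- part 1
    intro y0 z0 w0 r hr
    set R' := r + ‖uZero d y0 z0 w0‖ with hR'def
    clear_value R'
    have hR' : 0 ≤ R' := by rw [hR'def]; positivity
    have hprod : 0 ≤ cPhi d * Kb d q R' * R'^2 :=
      mul_nonneg (mul_nonneg hcp.le (Kb_nonneg d q hR')) (sq_nonneg R')
    have hC : (0:ℝ) < cPhi d * Kb d q R' * R'^2 / 2 + 1 := by linarith
    refine ⟨_, hC, ?_, ?_⟩
    · intro t0 t h0 ht v hv
      refine (part1_bound d hd q hr h0 ht hv).trans ?_
      rw [← hR'def]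
      have h := Real.exp_pos (-2*t)
      nlinarith
    · intro t ht v hv
      refine (part1_bound d hd q hr ht le_rfl hv).trans ?_
      rw [← hR'def]
      have h := Real.exp_pos (-2*t)
      nlinarith
  · -- part 2
    set K2 := Kb d q 2 with hK2def
    clear_value K2
    have hK2 : (0:ℝ) < K2 := by
      rw [hK2def]
      unfold Kb
      nlinarith [A3_nonneg d q]
    refine ⟨min 1 (1/(8 * cPhi d * K2)), lt_min one_pos (by positivity), ?_⟩
    intro r hrpos hrε y0 z0 w0 hu0pos hu0r v hv
    have hr1 : r < 1 := lt_of_lt_of_le hrε (min_le_left _ _)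
    have hr2 : r < 1/(8 * cPhi d * K2) := lt_of_lt_of_le hrε (min_le_right _ _)
    set R' := r + ‖uZero d y0 z0 w0‖ with hR'def
    clear_value R'
    have hR'pos : 0 < R' := hR'def ▸ add_pos_of_pos_of_nonneg hrpos (norm_nonneg _)
    have hR2r : R' < 2*r := by rw [hR'def]; linarith
    have h8 : 8 * cPhi d * K2 * r < 1 := by
      have hpos : (0:ℝ) < 8 * cPhi d * K2 := by positivity
      rw [lt_div_iff₀ hpos] at hr2
      linarith [hr2]
    have hsmall : 2 * cPhi d * Kb d q R' * R'^2 ≤ r := by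
      have hR'2 : R' ≤ 2 := by nlinarith
      have hKmon : Kb d q R' ≤ K2 := by
        rw [hK2def]; unfold Kb; nlinarith
      have hRsq : R'^2 ≤ 4*r^2 := by nlinarith
      have t1 : 2 * cPhi d * Kb d q R' ≤ 2 * cPhi d * K2 := by nlinarith
      have t2 : 2 * cPhi d * Kb d q R' * R'^2 ≤ (2 * cPhi d * K2) * (4*r^2) := by
        refine mul_le_mul t1 hRsq (sq_nonneg R') (by positivity)
      have t3 : (2 * cPhi d * K2) * (4*r^2) = (8 * cPhi d * K2 * r) * r := by ring
      nlinarith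
    have hball : ∀ t ≥ (0:ℝ),
        Real.exp (2*t) * ‖Tmap d q (ufun d y0 z0 w0) v t - ufun d y0 z0 w0 t‖ ≤ r := by
      intro t ht
      have hdiff : Tmap d q (ufun d y0 z0 w0) v t - ufun d y0 z0 w0 t
          = -(∫ s in Set.Ioi t, (Phi d t s).mulVec (bfun d q (v s))) := by
        unfold Tmap
        exact sub_sub_cancel_left _ _
      rw [hdiff, norm_neg]
      refine (Tmap_diff_bound d hd q hv ht).trans ?_
      rw [← hR'def]
      have he1 : Real.exp (-2*t) ≤ 1 := by
        rw [← Real.exp_zero]; exact Real.exp_le_exp.2 (by linarith)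
      have hnn : 0 ≤ 2 * cPhi d * Kb d q R' * R'^2 :=
        mul_nonneg (mul_nonneg (by linarith) (Kb_nonneg d q hR'pos.le)) (sq_nonneg R')
      nlinarith [Real.exp_pos (-2*t)]
    refine ⟨⟨Tmap_continuousOn d hd q hv, ⟨‖uZero d y0 z0 w0‖ + r, ?_⟩⟩, hball⟩
    intro t ht
    have h1 : Real.exp (2*t) * ‖ufun d y0 z0 w0 t‖ = ‖uZero d y0 z0 w0‖ := by
      rw [norm_ufun]
      linear_combination ‖uZero d y0 z0 w0‖ * exp_cancel t
    have h2 : ‖Tmap d q (ufun d y0 z0 w0) v t‖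
        ≤ ‖ufun d y0 z0 w0 t‖ + ‖Tmap d q (ufun d y0 z0 w0) v t - ufun d y0 z0 w0 t‖ := by
      have := norm_add_le (ufun d y0 z0 w0 t)
        (Tmap d q (ufun d y0 z0 w0) v t - ufun d y0 z0 w0 t)
      simpa using this
    have h3 := mul_le_mul_of_nonneg_left h2 (Real.exp_pos (2*t)).le
    rw [mul_add, h1] at h3
    linarith [hball t ht]
end

section
/- Suppose r > 0 and 0 < |u₀| < r are sufficiently small that T_u maps B̄_r(u) into itself, and let v ∈ B_r(u) = {v ∈ 𝕍 : ‖v − u‖ < r}. Then 1 is not an eigenvalue of the operator D(T_u)_v: if h ∈ 𝕍 satisfies h(t) = −∫_t^∞ Φ(t,s)·Db(v(s))·h(s) ds for all t ≥ 0, then h is identically 0. -/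
open Filter Topology MeasureTheory

set_option maxHeartbeats 1000000

/-- The Jacobian matrix `Db` of `b : ℝ⁴ → ℝ⁴`. -/
noncomputable def Db (d : ℕ) (q : ℝ) (x : Fin 4 → ℝ) : Matrix (Fin 4) (Fin 4) ℝ :=
  Matrix.of fun i j => fderiv ℝ (fun y => bfun d q y i) x (Pi.single j 1)

/- ================= auxiliary development ================= -/

noncomputable def pr (k : Fin 4) : (Fin 4 → ℝ) →L[ℝ] ℝ := ContinuousLinearMap.proj k

lemma hco (k : Fin 4) (x : Fin 4 → ℝ) : HasFDerivAt (fun y : Fin 4 → ℝ => y k) (pr k) x :=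
  (ContinuousLinearMap.proj (R := ℝ) (φ := fun _ : Fin 4 => ℝ) k).hasFDerivAt

/-- Explicit form of the Jacobian `Db`. -/
noncomputable def DbExp (d : ℕ) (q : ℝ) (x : Fin 4 → ℝ) : Matrix (Fin 4) (Fin 4) ℝ :=
  !![ -(3*(d:ℝ)*(x 0)^2 + (x 2)^2 - 2*x 2), 0, -(x 0)*(2*x 2 - 2), 4 * A3 d q / (d:ℝ) * x 3;
      -2*(x 1)*(2*(d:ℝ)*x 0 - 1), -2*((d:ℝ)*(x 0)^2 - x 0 + (x 2)^2 - 2*x 2), -2*(x 1)*(2*x 2 - 2), 0;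
      -2*(d:ℝ)*(x 0)*(x 2) + 2*(d:ℝ)*x 0, 0, -((d:ℝ)*(x 0)^2 + 3*(x 2)^2 - 6*x 2), 2 * A3 d q * x 3;
      -(x 3)*(2*(d:ℝ)*x 0 - 2), 0, -(x 3)*(2*x 2 - 3), -((d:ℝ)*(x 0)^2 - 2*x 0 + (x 2)^2 - 3*x 2) ]

lemma Db_eq (d : ℕ) (q : ℝ) (x : Fin 4 → ℝ) : Db d q x = DbExp d q x := by
  ext i j
  rw [Db]
  simp only [Matrix.of_apply]
  fin_cases i
  · show fderiv ℝ (fun y => bfun d q y 0) x (Pi.single j 1) = DbExp d q x 0 j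
    have hfe : (fun y : Fin 4 → ℝ => bfun d q y 0)
        = fun y => -(y 0) * ((d : ℝ) * (y 0 * y 0) + y 2 * y 2 - 2 * y 2)
            + (2 * A3 d q / (d : ℝ)) * (y 3 * y 3) := by
      funext y; simp [bfun]; try ring; try tauto
    have H := ((hco 0 x).neg.mul ((((hco 0 x).mul (hco 0 x)).const_mul (d:ℝ)).add
        ((hco 2 x).mul (hco 2 x)) |>.sub ((hco 2 x).const_mul 2))).add
        (((hco 3 x).mul (hco 3 x)).const_mul (2 * A3 d q / (d:ℝ)))
    rw [hfe]; erw [H.fderiv]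
    fin_cases j <;>
      · simp only [ContinuousLinearMap.add_apply, ContinuousLinearMap.sub_apply,
          ContinuousLinearMap.smul_apply, ContinuousLinearMap.neg_apply, pr,
          ContinuousLinearMap.proj_apply, smul_eq_mul, DbExp,
          Matrix.cons_val', Matrix.cons_val_zero, Matrix.cons_val_one, Matrix.head_cons,
          Matrix.empty_val', Matrix.cons_val_fin_one, Matrix.head_fin_const,
          Matrix.cons_val_two, Matrix.tail_cons, Matrix.cons_val_three]
        norm_num [Pi.single_apply, Fin.ext_iff, show ((3:Fin 4):ℕ)=3 from rfl,
          show ((2:Fin 4):ℕ)=2 from rfl, show ((1:Fin 4):ℕ)=1 from rfl,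
          show ((0:Fin 4):ℕ)=0 from rfl]
        try ring
        try tauto
  · show fderiv ℝ (fun y => bfun d q y 1) x (Pi.single j 1) = DbExp d q x 1 j
    have hfe : (fun y : Fin 4 → ℝ => bfun d q y 1)
        = fun y => (-2 * y 1) * ((d : ℝ) * (y 0 * y 0) - y 0 + y 2 * y 2 - 2 * y 2) := by
      funext y; simp [bfun]; try ring; try tauto
    have H := ((hco 1 x).const_mul (-2)).mul (((((hco 0 x).mul (hco 0 x)).const_mul (d:ℝ)).sub
        (hco 0 x)).add ((hco 2 x).mul (hco 2 x)) |>.sub ((hco 2 x).const_mul 2))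
    rw [hfe]; erw [H.fderiv]
    fin_cases j <;>
      · simp only [ContinuousLinearMap.add_apply, ContinuousLinearMap.sub_apply,
          ContinuousLinearMap.smul_apply, ContinuousLinearMap.neg_apply, pr,
          ContinuousLinearMap.proj_apply, smul_eq_mul, DbExp,
          Matrix.cons_val', Matrix.cons_val_zero, Matrix.cons_val_one, Matrix.head_cons,
          Matrix.empty_val', Matrix.cons_val_fin_one, Matrix.head_fin_const,
          Matrix.cons_val_two, Matrix.tail_cons, Matrix.cons_val_three]
        norm_num [Pi.single_apply, Fin.ext_iff, show ((3:Fin 4):ℕ)=3 from rfl,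
          show ((2:Fin 4):ℕ)=2 from rfl, show ((1:Fin 4):ℕ)=1 from rfl,
          show ((0:Fin 4):ℕ)=0 from rfl]
        try ring
        try tauto
  · show fderiv ℝ (fun y => bfun d q y 2) x (Pi.single j 1) = DbExp d q x 2 j
    have hfe : (fun y : Fin 4 → ℝ => bfun d q y 2)
        = fun y => -(y 2) * ((d : ℝ) * (y 0 * y 0) + y 2 * y 2 - 3 * y 2)
            + (d : ℝ) * (y 0 * y 0) + A3 d q * (y 3 * y 3) := by
      funext y; simp [bfun]; try ring; try tauto
    have H := (((hco 2 x).neg.mul ((((hco 0 x).mul (hco 0 x)).const_mul (d:ℝ)).add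
        ((hco 2 x).mul (hco 2 x)) |>.sub ((hco 2 x).const_mul 3))).add
        (((hco 0 x).mul (hco 0 x)).const_mul (d:ℝ))).add
        (((hco 3 x).mul (hco 3 x)).const_mul (A3 d q))
    rw [hfe]; erw [H.fderiv]
    fin_cases j <;>
      · simp only [ContinuousLinearMap.add_apply, ContinuousLinearMap.sub_apply,
          ContinuousLinearMap.smul_apply, ContinuousLinearMap.neg_apply, pr,
          ContinuousLinearMap.proj_apply, smul_eq_mul, DbExp,
          Matrix.cons_val', Matrix.cons_val_zero, Matrix.cons_val_one, Matrix.head_cons,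
          Matrix.empty_val', Matrix.cons_val_fin_one, Matrix.head_fin_const,
          Matrix.cons_val_two, Matrix.tail_cons, Matrix.cons_val_three]
        norm_num [Pi.single_apply, Fin.ext_iff, show ((3:Fin 4):ℕ)=3 from rfl,
          show ((2:Fin 4):ℕ)=2 from rfl, show ((1:Fin 4):ℕ)=1 from rfl,
          show ((0:Fin 4):ℕ)=0 from rfl]
        try ring
        try tauto
  · show fderiv ℝ (fun y => bfun d q y 3) x (Pi.single j 1) = DbExp d q x 3 j
    have hfe : (fun y : Fin 4 → ℝ => bfun d q y 3)
        = fun y => -(y 3) * ((d : ℝ) * (y 0 * y 0) - 2 * y 0 + y 2 * y 2 - 3 * y 2) := by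
      funext y; simp [bfun]; try ring; try tauto
    have H := (hco 3 x).neg.mul (((((hco 0 x).mul (hco 0 x)).const_mul (d:ℝ)).sub
        ((hco 0 x).const_mul 2)).add ((hco 2 x).mul (hco 2 x)) |>.sub ((hco 2 x).const_mul 3))
    rw [hfe]; erw [H.fderiv]
    fin_cases j <;>
      · simp only [ContinuousLinearMap.add_apply, ContinuousLinearMap.sub_apply,
          ContinuousLinearMap.smul_apply, ContinuousLinearMap.neg_apply, pr,
          ContinuousLinearMap.proj_apply, smul_eq_mul, DbExp,
          Matrix.cons_val', Matrix.cons_val_zero, Matrix.cons_val_one, Matrix.head_cons,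
          Matrix.empty_val', Matrix.cons_val_fin_one, Matrix.head_fin_const,
          Matrix.cons_val_two, Matrix.tail_cons, Matrix.cons_val_three]
        norm_num [Pi.single_apply, Fin.ext_iff, show ((3:Fin 4):ℕ)=3 from rfl,
          show ((2:Fin 4):ℕ)=2 from rfl, show ((1:Fin 4):ℕ)=1 from rfl,
          show ((0:Fin 4):ℕ)=0 from rfl]
        try ring
        try tauto

lemma myint {b : ℝ} (hb : 0 < b) (t : ℝ) :
    ∫ s in Set.Ioi t, Real.exp (-b * s) = Real.exp (-b * t) / b := by
  have hd : ∀ x ∈ Set.Ici t, HasDerivAt (fun s => -Real.exp (-b*s)/b) (Real.exp (-b*x)) x := by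
    intro x _
    have h1 : HasDerivAt (fun s : ℝ => -b * s) (-b) x :=
      (hasDerivAt_id x).const_mul (-b) |>.congr_deriv (by ring)
    have := h1.exp.neg.div_const b
    exact this.congr_deriv (by rw [mul_neg, neg_neg, mul_div_assoc, div_self hb.ne', mul_one])
  have hlim : Tendsto (fun s => -Real.exp (-b*s)/b) atTop (𝓝 0) := by
    have : Tendsto (fun s : ℝ => Real.exp (-b*s)) atTop (𝓝 0) :=
      Real.tendsto_exp_atBot.comp (tendsto_id.const_mul_atTop_of_neg (by linarith)
        |>.congr (fun x => rfl))
    simpa using (this.neg.div_const b)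
  have := integral_Ioi_of_hasDerivAt_of_tendsto' hd (exp_neg_integrableOn_Ioi t hb) hlim
  rw [this]; field_simp; ring

/-- generic row bound -/
lemma row_bound {e0 e1 e2 e3 w0 w1 w2 w3 B W : ℝ}
    (h0 : |e0| ≤ B) (h1 : |e1| ≤ B) (h2 : |e2| ≤ B) (h3 : |e3| ≤ B)
    (g0 : |w0| ≤ W) (g1 : |w1| ≤ W) (g2 : |w2| ≤ W) (g3 : |w3| ≤ W)
    (hB : 0 ≤ B) :
    |e0*w0 + e1*w1 + e2*w2 + e3*w3| ≤ 4 * B * W := by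
  have k0 : |e0*w0| ≤ B*W := by
    rw [abs_mul]; exact mul_le_mul h0 g0 (abs_nonneg _) hB
  have k1 : |e1*w1| ≤ B*W := by
    rw [abs_mul]; exact mul_le_mul h1 g1 (abs_nonneg _) hB
  have k2 : |e2*w2| ≤ B*W := by
    rw [abs_mul]; exact mul_le_mul h2 g2 (abs_nonneg _) hB
  have k3 : |e3*w3| ≤ B*W := by
    rw [abs_mul]; exact mul_le_mul h3 g3 (abs_nonneg _) hB
  calc |e0*w0 + e1*w1 + e2*w2 + e3*w3| ≤ |e0*w0 + e1*w1 + e2*w2| + |e3*w3| := abs_add_le _ _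
    _ ≤ (|e0*w0 + e1*w1| + |e2*w2|) + |e3*w3| := by gcongr; exact abs_add_le _ _
    _ ≤ ((|e0*w0| + |e1*w1|) + |e2*w2|) + |e3*w3| := by gcongr; exact abs_add_le _ _
    _ ≤ 4 * B * W := by linarith

/-- The coefficient bounding the entries of `DbExp`. -/
noncomputable def Qc (d : ℕ) (q : ℝ) : ℝ := 4*(d:ℝ) + 9 + 6*|A3 d q|

lemma Qc_nonneg (d : ℕ) (q : ℝ) : 0 ≤ Qc d q := by
  unfold Qc; positivity

lemma Db_mulVec_bound (d : ℕ) (hd : 2 ≤ d) (q : ℝ) (x w : Fin 4 → ℝ) :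
    ‖(DbExp d q x).mulVec w‖ ≤ 4 * (Qc d q * (‖x‖ + ‖x‖^2)) * ‖w‖ := by
  have hdR : (2:ℝ) ≤ (d:ℝ) := by exact_mod_cast hd
  set N := ‖x‖ with hN
  set W := ‖w‖ with hW
  have hN0 : 0 ≤ N := norm_nonneg _
  have hW0 : 0 ≤ W := norm_nonneg _
  have hQ : 0 ≤ Qc d q := Qc_nonneg d q
  have hB : 0 ≤ Qc d q * (N + N^2) := by positivity
  have hx : ∀ k, |x k| ≤ N := fun k => by
    rw [← Real.norm_eq_abs]; exact norm_le_pi_norm x k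
  have hwk : ∀ k, |w k| ≤ W := fun k => by
    rw [← Real.norm_eq_abs]; exact norm_le_pi_norm w k
  have hsq : ∀ k, (x k)^2 ≤ N^2 := fun k => by
    have := hx k
    nlinarith [abs_nonneg (x k), sq_abs (x k)]
  have hxlb : ∀ k, -N ≤ x k := fun k => (abs_le.mp (hx k)).1
  have hxub : ∀ k, x k ≤ N := fun k => (abs_le.mp (hx k)).2
  have hA3d : 0 ≤ |A3 d q| / (d:ℝ) := by positivity
  have hA3 : 0 ≤ |A3 d q| := abs_nonneg _
  have hd0 : (0:ℝ) ≤ (d:ℝ) := by positivity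
  have hp : ∀ k l : Fin 4, -(N^2) ≤ x k * x l ∧ x k * x l ≤ N^2 := by
    intro k l
    constructor
    · nlinarith [hxlb k, hxub k, hxlb l, hxub l, hN0]
    · nlinarith [hxlb k, hxub k, hxlb l, hxub l, hN0]
  have hdp : ∀ k l : Fin 4, (d:ℝ) * (x k * x l) ≤ (d:ℝ) * N^2 :=
    fun k l => mul_le_mul_of_nonneg_left (hp k l).2 hd0
  have hdpl : ∀ k l : Fin 4, (d:ℝ) * (-(N^2)) ≤ (d:ℝ) * (x k * x l) :=
    fun k l => mul_le_mul_of_nonneg_left (hp k l).1 hd0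
  have hA3u : A3 d q * x 3 ≤ |A3 d q| * N := by
    calc A3 d q * x 3 ≤ |A3 d q * x 3| := le_abs_self _
      _ = |A3 d q| * |x 3| := abs_mul _ _
      _ ≤ |A3 d q| * N := mul_le_mul_of_nonneg_left (hx 3) hA3
  have hA3l : -(|A3 d q| * N) ≤ A3 d q * x 3 := by
    have h1 : |A3 d q * x 3| ≤ |A3 d q| * N := by
      rw [abs_mul]; exact mul_le_mul_of_nonneg_left (hx 3) hA3
    have := neg_abs_le (A3 d q * x 3)
    linarith
  have hdiv : |A3 d q| / (d:ℝ) ≤ |A3 d q| := div_le_self hA3 (by linarith)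
  have habs3 : |4 * A3 d q / (d:ℝ) * x 3| ≤ 4 * |A3 d q| * N := by
    have h1 : |4 * A3 d q / (d:ℝ) * x 3| = 4 * |A3 d q| / (d:ℝ) * |x 3| := by
      rw [abs_mul, abs_div, abs_mul]
      norm_num [abs_of_nonneg hd0]
    rw [h1]
    have h2 : 4 * |A3 d q| / (d:ℝ) * |x 3| ≤ 4 * |A3 d q| * |x 3| := by
      apply mul_le_mul_of_nonneg_right _ (abs_nonneg _)
      rw [div_le_iff₀ (by linarith : (0:ℝ) < (d:ℝ))]
      nlinarith [mul_nonneg hA3 (by linarith : (0:ℝ) ≤ (d:ℝ) - 1)]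
    have h3 : 4 * |A3 d q| * |x 3| ≤ 4 * |A3 d q| * N :=
      mul_le_mul_of_nonneg_left (hx 3) (by linarith)
    linarith
  have hE03u : 4 * A3 d q / (d:ℝ) * x 3 ≤ 4 * |A3 d q| * N :=
    le_trans (le_abs_self _) habs3
  have hE03l : -(4 * |A3 d q| * N) ≤ 4 * A3 d q / (d:ℝ) * x 3 := by
    have := neg_abs_le (4 * A3 d q / (d:ℝ) * x 3)
    linarith
  have hdx : ∀ k : Fin 4, (d:ℝ) * x k ≤ (d:ℝ) * N :=
    fun k => mul_le_mul_of_nonneg_left (hxub k) hd0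
  have hdxl : ∀ k : Fin 4, (d:ℝ) * (-N) ≤ (d:ℝ) * x k :=
    fun k => mul_le_mul_of_nonneg_left (hxlb k) hd0
  rw [pi_norm_le_iff_of_nonneg (by positivity)]
  intro i
  have key : ∀ j, |DbExp d q x i j| ≤ Qc d q * (N + N^2) := by
    intro j
    fin_cases i <;> fin_cases j <;>
      · simp only [DbExp]
        norm_num [abs_le, -abs_mul]
        first
        | exact hB
        | constructor <;>
            (simp only [Qc]
             linarith [hsq 0, hsq 1, hsq 2, hsq 3, hxlb 0, hxub 0, hxlb 1, hxub 1,
               hxlb 2, hxub 2, hxlb 3, hxub 3, sq_nonneg N, hN0, hdR, hA3, hA3d, hd0,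
               (hp 0 1).1, (hp 0 1).2, (hp 0 2).1, (hp 0 2).2, (hp 0 3).1, (hp 0 3).2,
               (hp 1 2).1, (hp 1 2).2, (hp 2 3).1, (hp 2 3).2,
               hdp 0 1, hdpl 0 1, hdp 0 2, hdpl 0 2, hdp 0 3, hdpl 0 3,
               hdp 0 0, hdpl 0 0,
               hA3u, hA3l, hE03u, hE03l,
               mul_nonneg hA3 hN0,
               mul_nonneg (mul_nonneg hA3 hN0) hN0,
               mul_nonneg hd0 hN0, mul_nonneg hd0 (sq_nonneg N),
               mul_nonneg hd0 (sq_nonneg (x 0)), sq_nonneg (x 0), sq_nonneg (x 2),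
               sq_nonneg (x 3), hdx 0, hdxl 0, hdx 2, hdxl 2,
               mul_nonneg hN0 hN0, mul_nonneg (mul_nonneg hN0 hN0) hN0])
  have : ((DbExp d q x).mulVec w) i
      = DbExp d q x i 0 * w 0 + DbExp d q x i 1 * w 1
        + DbExp d q x i 2 * w 2 + DbExp d q x i 3 * w 3 := by
    simp [Matrix.mulVec, dotProduct, Fin.sum_univ_four]
  rw [Real.norm_eq_abs, this]
  have := row_bound (key 0) (key 1) (key 2) (key 3) (hwk 0) (hwk 1) (hwk 2) (hwk 3) hB
  linarith

/-- coefficient for the `Phi` bound -/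
noncomputable def CP (d : ℕ) : ℝ := 1 + A2 d / (2*(d:ℝ))

lemma CP_nonneg (d : ℕ) : 0 ≤ CP d := by
  unfold CP A2; positivity

lemma Phi_mulVec_bound (d : ℕ) (t s : ℝ) (hts : t ≤ s) (w : Fin 4 → ℝ) :
    ‖(Phi d t s).mulVec w‖ ≤ 2 * CP d * Real.exp (2*(s-t)) * ‖w‖ := by
  set W := ‖w‖ with hW
  have hW0 : 0 ≤ W := norm_nonneg _
  set E := Real.exp (-2*(t-s)) with hE
  have hEexp : E = Real.exp (2*(s-t)) := by rw [hE]; congr 1; ring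
  have hE1 : 1 ≤ E := by
    rw [hEexp]; apply Real.one_le_exp; linarith
  have hc : 0 ≤ A2 d / (2*(d:ℝ)) := by unfold A2; positivity
  set c := A2 d / (2*(d:ℝ)) with hcdef
  have hCP : CP d = 1 + c := rfl
  have hwk : ∀ k, |w k| ≤ W := fun k => by
    rw [← Real.norm_eq_abs]; exact norm_le_pi_norm w k
  have hE0 : 0 ≤ E := by rw [hE]; positivity
  have hnn : 0 ≤ 2 * CP d * E * W :=
    mul_nonneg (mul_nonneg (mul_nonneg (by norm_num) (CP_nonneg d)) hE0) hW0
  rw [← hEexp, pi_norm_le_iff_of_nonneg hnn]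
  intro i
  have hcE : (0:ℝ) ≤ c * (E - 1) := mul_nonneg hc (by linarith)
  fin_cases i <;>
    (simp only [Phi, Matrix.mulVec, dotProduct, Fin.sum_univ_four, ← hE, ← hcdef,
       Real.norm_eq_abs]
     norm_num [Matrix.cons_val_two, Matrix.cons_val_three, Matrix.tail_cons, Matrix.head_cons])
  · have h1 : |w 0 + c * (E - 1) * w 1| ≤ |w 0| + c * (E - 1) * |w 1| := by
      have ha := abs_add_le (w 0) (c * (E - 1) * w 1)
      have h2 : |c * (E - 1) * w 1| = c * (E - 1) * |w 1| := by
        rw [abs_mul, abs_of_nonneg hcE]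
      linarith [ha, h2.le, h2.ge]
    refine le_trans h1 ?_
    rw [hCP]
    nlinarith [hwk 0, hwk 1, abs_nonneg (w 0), abs_nonneg (w 1),
      mul_nonneg hc hW0, mul_nonneg (mul_nonneg hc hE0) hW0,
      mul_nonneg (sub_nonneg.mpr hE1) hW0,
      mul_nonneg (mul_nonneg hc (sub_nonneg.mpr hE1)) hW0, hE0, hW0, hc, hE1]
  · have h2 : |E * w 1| = E * |w 1| := by rw [abs_mul, abs_of_nonneg hE0]
    rw [abs_of_nonneg hE0, hCP]
    nlinarith [hwk 1, abs_nonneg (w 1), mul_nonneg hc hW0,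
      mul_nonneg (mul_nonneg hc hE0) hW0, hE0, hW0, hc, hE1,
      mul_nonneg hE0 hW0]
  · have h2 : |E * w 2| = E * |w 2| := by rw [abs_mul, abs_of_nonneg hE0]
    rw [abs_of_nonneg hE0, hCP]
    nlinarith [hwk 2, abs_nonneg (w 2), mul_nonneg hc hW0,
      mul_nonneg (mul_nonneg hc hE0) hW0, hE0, hW0, hc, hE1,
      mul_nonneg hE0 hW0]
  · have h2 : |E * w 3| = E * |w 3| := by rw [abs_mul, abs_of_nonneg hE0]
    rw [abs_of_nonneg hE0, hCP]
    nlinarith [hwk 3, abs_nonneg (w 3), mul_nonneg hc hW0,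
      mul_nonneg (mul_nonneg hc hE0) hW0, hE0, hW0, hc, hE1,
      mul_nonneg hE0 hW0]

/-- If `r` and `0 < |u₀| < r` are small enough that `T_u` maps `B̄_r(u)` into itself and
`v ∈ B_r(u)`, then `1` is not an eigenvalue of `D(T_u)_v`: any `h ∈ 𝕍` with
`h(t) = −∫_t^∞ Φ(t,s)·Db(v(s))·h(s) ds` for all `t ≥ 0` vanishes identically. -/
theorem stmt9 (d : ℕ) (hd : 2 ≤ d) (q : ℝ) (y0 z0 w0 r : ℝ) (hr : 0 < r)
    (hu0 : 0 < ‖uZero d y0 z0 w0‖) (hu0r : ‖uZero d y0 z0 w0‖ < r)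
    (hmap : ∀ v, inBall r (ufun d y0 z0 w0) v →
      inBall r (ufun d y0 z0 w0) (Tmap d q (ufun d y0 z0 w0) v))
    (v : ℝ → Fin 4 → ℝ) (hv : memV v) (hvball : Vnorm (v - ufun d y0 z0 w0) < r)
    (h : ℝ → Fin 4 → ℝ) (hh : memV h)
    (hfix : ∀ t ≥ (0:ℝ),
      h t = -∫ s in Set.Ioi t, (Phi d t s).mulVec ((Db d q (v s)).mulVec (h s))) :
    ∀ t ≥ (0:ℝ), h t = 0 := by
  obtain ⟨hvC, Mv, hMv⟩ := hv
  obtain ⟨hhC, Mh, hMh⟩ := hh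
  have hMv0 : 0 ≤ Mv := le_trans (by positivity) (hMv 0 le_rfl)
  have hMh0 : 0 ≤ Mh := le_trans (by positivity) (hMh 0 le_rfl)
  set K := 8 * CP d * Qc d q * (Mv + Mv^2) with hKdef
  have hK0 : 0 ≤ K := by
    have := CP_nonneg d; have := Qc_nonneg d q
    rw [hKdef]; positivity
  -- decay bound on v
  have hvdecay : ∀ s ≥ (0:ℝ), ‖v s‖ ≤ Mv * Real.exp (-2*s) := by
    intro s hs
    have h1 := hMv s hs
    have e1 : Real.exp (-2*s) * Real.exp (2*s) = 1 := by
      rw [← Real.exp_add]; norm_num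
    nlinarith [Real.exp_pos (-2*s), norm_nonneg (v s),
      mul_le_mul_of_nonneg_left h1 (le_of_lt (Real.exp_pos (-2*s)))]
  -- key pointwise bound
  have key : ∀ t ≥ (0:ℝ), ∀ s ∈ Set.Ioi t,
      ‖(Phi d t s).mulVec ((Db d q (v s)).mulVec (h s))‖
        ≤ K * Real.exp (-2*t) * ‖h s‖ := by
    intro t ht s hs
    have hts : t ≤ s := le_of_lt hs
    have hs0 : (0:ℝ) ≤ s := le_trans ht hts
    rw [Db_eq]
    have hP := Phi_mulVec_bound d t s hts ((DbExp d q (v s)).mulVec (h s))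
    have hD := Db_mulVec_bound d hd q (v s) (h s)
    have hEneg : Real.exp (-2*s) ≤ 1 := by
      rw [Real.exp_le_one_iff]; linarith
    have hEneg0 : 0 ≤ Real.exp (-2*s) := le_of_lt (Real.exp_pos _)
    have hvd := hvdecay s hs0
    have hNv0 : 0 ≤ ‖v s‖ := norm_nonneg _
    have hQ := Qc_nonneg d q
    have hCPn := CP_nonneg d
    have hstep : ‖v s‖ + ‖v s‖^2 ≤ (Mv + Mv^2) * Real.exp (-2*s) := by
      have h2 : ‖v s‖^2 ≤ Mv^2 * Real.exp (-2*s) := by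
        have hm := mul_self_le_mul_self hNv0 hvd
        nlinarith [mul_nonneg (mul_nonneg (sq_nonneg Mv) hEneg0) (sub_nonneg.mpr hEneg)]
      nlinarith
    have hD2 : (4 * (Qc d q * (‖v s‖ + ‖v s‖^2)) * ‖h s‖)
        ≤ 4 * (Qc d q * ((Mv + Mv^2) * Real.exp (-2*s))) * ‖h s‖ := by
      refine mul_le_mul_of_nonneg_right ?_ (norm_nonneg _)
      refine mul_le_mul_of_nonneg_left ?_ (by norm_num)
      exact mul_le_mul_of_nonneg_left hstep hQ
    have hee : Real.exp (2*(s-t)) * Real.exp (-2*s) = Real.exp (-2*t) := by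
      rw [← Real.exp_add]; congr 1; ring
    calc ‖(Phi d t s).mulVec ((DbExp d q (v s)).mulVec (h s))‖
        ≤ 2 * CP d * Real.exp (2*(s-t)) * ‖(DbExp d q (v s)).mulVec (h s)‖ := hP
      _ ≤ 2 * CP d * Real.exp (2*(s-t)) * (4 * (Qc d q * (‖v s‖ + ‖v s‖^2)) * ‖h s‖) := by
          refine mul_le_mul_of_nonneg_left hD ?_
          have := Real.exp_pos (2*(s-t))
          nlinarith
      _ ≤ 2 * CP d * Real.exp (2*(s-t))
            * (4 * (Qc d q * ((Mv + Mv^2) * Real.exp (-2*s))) * ‖h s‖) := by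
          refine mul_le_mul_of_nonneg_left hD2 ?_
          have := Real.exp_pos (2*(s-t))
          nlinarith
      _ = K * Real.exp (-2*t) * ‖h s‖ := by rw [hKdef, ← hee]; ring
  -- the iterative bound
  have main : ∀ n : ℕ, ∀ t ≥ (0:ℝ),
      ‖h t‖ ≤ Mh * K^n / (2^n * (Nat.factorial n)) * Real.exp (-(2*((n:ℝ)+1)) * t) := by
    intro n
    induction n with
    | zero =>
        intro t ht
        have h1 := hMh t ht
        have hgen : ‖h t‖ ≤ Mh * Real.exp (-(2*(((0:ℕ):ℝ)+1)) * t) := by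
          have e0 : (-(2*(((0:ℕ):ℝ)+1)) * t + 2*t) = 0 := by push_cast; ring
          have e1 : Real.exp (-(2*(((0:ℕ):ℝ)+1)) * t) * Real.exp (2*t) = 1 := by
            rw [← Real.exp_add, e0, Real.exp_zero]
          nlinarith [Real.exp_pos (-(2*(((0:ℕ):ℝ)+1)) * t), norm_nonneg (h t),
            mul_le_mul_of_nonneg_left h1 (le_of_lt (Real.exp_pos (-(2*(((0:ℕ):ℝ)+1)) * t)))]
        simpa using hgen
    | succ n ih =>
        intro t ht
        rw [hfix t ht, norm_neg]
        set Cn := Mh * K^n / (2^n * (Nat.factorial n)) with hCn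
        have hCn0 : 0 ≤ Cn := by
          rw [hCn]; positivity
        set b := 2*((n:ℝ)+1) with hb
        have hb0 : (0:ℝ) < b := by rw [hb]; positivity
        have hInt : IntegrableOn (fun s => (K * Real.exp (-2*t) * Cn) * Real.exp (-b * s))
            (Set.Ioi t) := (exp_neg_integrableOn_Ioi t hb0).const_mul _
        have hae : ∀ᵐ s ∂(volume.restrict (Set.Ioi t)),
            ‖(Phi d t s).mulVec ((Db d q (v s)).mulVec (h s))‖
              ≤ (K * Real.exp (-2*t) * Cn) * Real.exp (-b * s) := by
          rw [ae_restrict_iff' measurableSet_Ioi]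
          refine Filter.Eventually.of_forall (fun s hs => ?_)
          have hs0 : (0:ℝ) ≤ s := le_trans ht (le_of_lt hs)
          have h1 := key t ht s hs
          have h2 := ih s hs0
          refine le_trans h1 ?_
          have := mul_le_mul_of_nonneg_left h2
            (by positivity : (0:ℝ) ≤ K * Real.exp (-2*t))
          calc K * Real.exp (-2*t) * ‖h s‖
              ≤ K * Real.exp (-2*t) * (Cn * Real.exp (-(2*((n:ℝ)+1)) * s)) := this
            _ = (K * Real.exp (-2*t) * Cn) * Real.exp (-b * s) := by rw [hb]; ring
        refine le_trans (norm_integral_le_of_norm_le hInt hae) ?_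
        rw [MeasureTheory.integral_const_mul, myint hb0 t]
        -- now show equality/inequality with the target
        have hfac : (Nat.factorial (n+1) : ℝ) = ((n:ℝ)+1) * (Nat.factorial n : ℝ) := by
          rw [Nat.factorial_succ]; push_cast; ring
        have hee : Real.exp (-2*t) * Real.exp (-b * t) = Real.exp (-(2*(((n:ℝ)+1)+1)) * t) := by
          rw [← Real.exp_add]; congr 1; rw [hb]; ring
        have hfn0 : (Nat.factorial n : ℝ) ≠ 0 := by
          exact_mod_cast Nat.factorial_ne_zero n
        have h2n0 : ((2:ℝ)^n) ≠ 0 := by positivity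
        have hn1 : ((n:ℝ)+1) ≠ 0 := by positivity
        refine le_of_eq ?_
        rw [hCn, hb]
        push_cast [Nat.factorial_succ]
        have hee2 : Real.exp (-(2*((n:ℝ)+1)) * t) * Real.exp (-2*t)
            = Real.exp (-(2*((n:ℝ)+1+1)) * t) := by
          rw [← Real.exp_add]; congr 1; ring
        rw [← hee2]
        field_simp
        ring
  -- conclude
  intro t ht
  have hexp1 : ∀ n : ℕ, Real.exp (-(2*((n:ℝ)+1)) * t) ≤ 1 := by
    intro n
    rw [Real.exp_le_one_iff]
    have : (0:ℝ) ≤ 2*((n:ℝ)+1) := by positivity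
    nlinarith
  have hbound : ∀ n : ℕ, ‖h t‖ ≤ Mh * (K/2)^n / (Nat.factorial n) := by
    intro n
    have h1 := main n t ht
    have hCn0 : 0 ≤ Mh * K^n / (2^n * (Nat.factorial n)) := by positivity
    have h2 : ‖h t‖ ≤ Mh * K^n / (2^n * (Nat.factorial n)) := by
      nlinarith [hexp1 n, Real.exp_pos (-(2*((n:ℝ)+1)) * t),
        mul_nonneg hCn0 (sub_nonneg.mpr (hexp1 n))]
    refine le_trans h2 (le_of_eq ?_)
    rw [div_pow]
    field_simp
    try ring
  have htend : Tendsto (fun n : ℕ => Mh * (K/2)^n / (Nat.factorial n)) atTop (𝓝 0) := by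
    have := FloorSemiring.tendsto_mul_pow_div_factorial_sub_atTop Mh (K/2) 0
    simpa using this
  have : ‖h t‖ ≤ 0 := ge_of_tendsto' htend hbound
  exact norm_eq_zero.mp (le_antisymm this (norm_nonneg _))
end

section
/- Let (X,Y,Z,W) be a solution of (★) on (−∞, t_max) such that (X,Y,Z,W)(t) → (0,0,1,0) as t → −∞ and |∫_{−∞}^{T₀} X(t) dt| < ∞ for some T₀ < t_max. Suppose Y(t₀) > 0 for some t₀ and λ > 0, and set g(t) = λ·exp(∫_{−∞}^{t} X(τ)dτ) and 𝓛 = g·Y. Then 𝓛 is strictly increasing on (−∞, t_max), 𝓛(t) > 0 for all t, and 0 < ∫_{−∞}^{T₀} 𝓛(t) dt < ∞. -/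
open Filter Topology MeasureTheory

/-- `(X,Y,Z,W)` solves the nonlinear system (★) on the set `s`. -/
def StarSystem (d : ℕ) (q : ℝ) (X Y Z W : ℝ → ℝ) (s : Set ℝ) : Prop :=
  ∀ t ∈ s,
    HasDerivAt X
      (X t * ((d : ℝ) * X t^2 + Z t^2 - 1) + (A2 d / (d : ℝ)) * Y t^2
        - (2 * A3 d q / (d : ℝ)) * W t^2) t ∧
    HasDerivAt Y (Y t * ((d : ℝ) * X t^2 + Z t^2 - X t)) t ∧
    HasDerivAt Z (Z t * ((d : ℝ) * X t^2 + Z t^2 - 1) + A3 d q * W t^2) t ∧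
    HasDerivAt W (W t * ((d : ℝ) * X t^2 + Z t^2 - 2*X t + Z t)) t

lemma integrableOn_exp_half_Iic (c : ℝ) :
    MeasureTheory.IntegrableOn (fun x => Real.exp (x/2)) (Set.Iic c) := by
  have hcont : Continuous fun x : ℝ => Real.exp (x/2) :=
    Real.continuous_exp.comp (continuous_id.div_const 2)
  have hderiv : ∀ x : ℝ, HasDerivAt (fun u : ℝ => 2 * Real.exp (u/2)) (Real.exp (x/2)) x := by
    intro x
    have h1 : HasDerivAt (fun u : ℝ => u/2) (1/2) x := (hasDerivAt_id x).div_const 2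
    have h2 := (h1.exp).const_mul 2
    refine h2.congr_deriv ?_
    ring
  refine MeasureTheory.integrableOn_Iic_of_intervalIntegral_norm_bounded
    (2 * Real.exp (c/2)) c (fun y => hcont.integrableOn_Ioc) tendsto_id ?_
  refine Filter.Eventually.of_forall fun y => ?_
  have h2 : (∫ x in y..c, ‖Real.exp (x/2)‖) = ∫ x in y..c, Real.exp (x/2) :=
    intervalIntegral.integral_congr fun x _ => Real.norm_of_nonneg (Real.exp_pos _).le
  simp only [id_eq]
  rw [h2, intervalIntegral.integral_eq_sub_of_hasDerivAt (fun x _ => hderiv x)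
    (hcont.intervalIntegrable y c)]
  nlinarith [Real.exp_pos (y/2)]

/-- If `(X,Y,Z,W)` solves (★) on `(−∞, t_max)` with limit `(0,0,1,0)` at `−∞` and `X`
integrable on `(−∞, T₀]` for some `T₀ < t_max`, and if `Y(t₀) > 0` for some `t₀` and
`λ > 0`, then `𝓛(t) = λ·exp(∫_{−∞}^t X)·Y(t)` is strictly increasing and positive, and
`0 < ∫_{−∞}^{T₀} 𝓛 < ∞`. -/
theorem stmt12 (d : ℕ) (hd : 2 ≤ d) (q : ℝ) (tmax : ℝ) (X Y Z W : ℝ → ℝ)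
    (hode : StarSystem d q X Y Z W (Set.Iio tmax))
    (hlimX : Tendsto X atBot (𝓝 0)) (hlimY : Tendsto Y atBot (𝓝 0))
    (hlimZ : Tendsto Z atBot (𝓝 1)) (hlimW : Tendsto W atBot (𝓝 0))
    (T0 : ℝ) (hT0 : T0 < tmax) (hint : IntegrableOn X (Set.Iic T0))
    (t0 : ℝ) (ht0 : t0 < tmax) (hYt0 : 0 < Y t0)
    (lam : ℝ) (hlam : 0 < lam) :
    StrictMonoOn (fun t => lam * Real.exp (∫ τ in Set.Iic t, X τ) * Y t) (Set.Iio tmax) ∧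
    (∀ t < tmax, 0 < lam * Real.exp (∫ τ in Set.Iic t, X τ) * Y t) ∧
    IntegrableOn (fun t => lam * Real.exp (∫ τ in Set.Iic t, X τ) * Y t) (Set.Iic T0) ∧
    0 < ∫ t in Set.Iic T0, lam * Real.exp (∫ τ in Set.Iic t, X τ) * Y t := by
  have hopen : IsOpen (Set.Iio tmax) := isOpen_Iio
  have hconv : Convex ℝ (Set.Iio tmax) := convex_Iio tmax
  have hXco : ContinuousOn X (Set.Iio tmax) :=
    fun t ht => ((hode t ht).1).continuousAt.continuousWithinAt
  have hZco : ContinuousOn Z (Set.Iio tmax) :=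
    fun t ht => ((hode t ht).2.2.1).continuousAt.continuousWithinAt
  have hF2co : ContinuousOn (fun t => (d : ℝ) * X t^2 + Z t^2) (Set.Iio tmax) :=
    ((continuousOn_const.mul (hXco.pow 2)).add (hZco.pow 2))
  -- antiderivatives of continuous functions on `Iio tmax`
  have keyInt : ∀ c ∈ Set.Iio tmax, ∀ g : ℝ → ℝ, ContinuousOn g (Set.Iio tmax) →
      ∀ t ∈ Set.Iio tmax, HasDerivAt (fun u => ∫ τ in c..u, g τ) (g t) t := by
    intro c hc g hg t ht
    refine intervalIntegral.integral_hasDerivAt_right ?_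
      (hg.stronglyMeasurableAtFilter hopen t ht) (hg.continuousAt (hopen.mem_nhds ht))
    refine (hg.mono ?_).intervalIntegrable
    intro x hx
    exact lt_of_le_of_lt hx.2 (max_lt hc ht)
  -- Step 1: `Y` is positive on `Iio tmax`
  have hYpos : ∀ t ∈ Set.Iio tmax, 0 < Y t := by
    have hFco : ContinuousOn (fun t => ((d : ℝ) * X t^2 + Z t^2) - X t) (Set.Iio tmax) :=
      hF2co.sub hXco
    have hGd : ∀ t ∈ Set.Iio tmax,
        HasDerivAt (fun u => ∫ τ in t0..u, (((d : ℝ) * X τ^2 + Z τ^2) - X τ))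
          (((d : ℝ) * X t^2 + Z t^2) - X t) t := keyInt t0 ht0 _ hFco
    have hhd : ∀ t ∈ Set.Iio tmax, HasDerivAt
        (fun u => Y u * Real.exp (-(∫ τ in t0..u, (((d : ℝ) * X τ^2 + Z τ^2) - X τ))))
        0 t := by
      intro t ht
      have h1 := (hode t ht).2.1
      have h2 := ((hGd t ht).neg).exp
      have h3 := h1.mul h2
      refine h3.congr_deriv ?_
      ring
    have hmono : MonotoneOn
        (fun u => Y u * Real.exp (-(∫ τ in t0..u, (((d : ℝ) * X τ^2 + Z τ^2) - X τ))))
        (Set.Iio tmax) := by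
      refine monotoneOn_of_deriv_nonneg hconv
        (fun t ht => (hhd t ht).continuousAt.continuousWithinAt)
        (fun t ht => (hhd t (by rwa [hopen.interior_eq] at ht)).differentiableAt.differentiableWithinAt)
        (fun t ht => ?_)
      rw [(hhd t (by rwa [hopen.interior_eq] at ht)).deriv]
    have hanti : AntitoneOn
        (fun u => Y u * Real.exp (-(∫ τ in t0..u, (((d : ℝ) * X τ^2 + Z τ^2) - X τ))))
        (Set.Iio tmax) := by
      refine antitoneOn_of_deriv_nonpos hconv
        (fun t ht => (hhd t ht).continuousAt.continuousWithinAt)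
        (fun t ht => (hhd t (by rwa [hopen.interior_eq] at ht)).differentiableAt.differentiableWithinAt)
        (fun t ht => ?_)
      rw [(hhd t (by rwa [hopen.interior_eq] at ht)).deriv]
    intro t ht
    have hconst : Y t * Real.exp (-(∫ τ in t0..t, (((d : ℝ) * X τ^2 + Z τ^2) - X τ)))
        = Y t0 * Real.exp (-(∫ τ in t0..t0, (((d : ℝ) * X τ^2 + Z τ^2) - X τ))) := by
      rcases le_total t t0 with hle | hle
      · exact le_antisymm (hmono ht ht0 hle) (hanti ht ht0 hle)
      · exact le_antisymm (hanti ht0 ht hle) (hmono ht0 ht hle)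
    rw [intervalIntegral.integral_same, neg_zero, Real.exp_zero, mul_one] at hconst
    nlinarith [Real.exp_pos (-(∫ τ in t0..t, (((d : ℝ) * X τ^2 + Z τ^2) - X τ)))]
  -- Step 2: `Z` is positive on `Iio tmax`
  have hA3 : 0 ≤ A3 d q := by unfold A3; positivity
  have hZpos : ∀ t ∈ Set.Iio tmax, 0 < Z t := by
    intro t1 ht1
    obtain ⟨a, ha⟩ := eventually_atBot.mp (hlimZ.eventually_const_lt (by norm_num : (1/2:ℝ) < 1))
    have hcs : min a t1 ∈ Set.Iio tmax := lt_of_le_of_lt (min_le_right a t1) ht1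
    have hZc : 1/2 < Z (min a t1) := ha _ (min_le_left a t1)
    have hHd := keyInt (min a t1) hcs (fun τ => ((d : ℝ) * X τ^2 + Z τ^2) - 1)
      (hF2co.sub continuousOn_const)
    have hhd : ∀ t ∈ Set.Iio tmax, HasDerivAt
        (fun u => Z u * Real.exp (-(∫ τ in (min a t1)..u, (((d : ℝ) * X τ^2 + Z τ^2) - 1))))
        (A3 d q * W t^2 *
          Real.exp (-(∫ τ in (min a t1)..t, (((d : ℝ) * X τ^2 + Z τ^2) - 1)))) t := by
      intro t ht
      have h1 := (hode t ht).2.2.1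
      have h2 := ((hHd t ht).neg).exp
      have h3 := h1.mul h2
      refine h3.congr_deriv ?_
      simp only [Pi.neg_apply]
      ring
    have hmono : MonotoneOn
        (fun u => Z u * Real.exp (-(∫ τ in (min a t1)..u, (((d : ℝ) * X τ^2 + Z τ^2) - 1))))
        (Set.Iio tmax) := by
      refine monotoneOn_of_deriv_nonneg hconv
        (fun t ht => (hhd t ht).continuousAt.continuousWithinAt)
        (fun t ht => (hhd t (by rwa [hopen.interior_eq] at ht)).differentiableAt.differentiableWithinAt)
        (fun t ht => ?_)
      rw [(hhd t (by rwa [hopen.interior_eq] at ht)).deriv]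
      have := Real.exp_pos (-(∫ τ in (min a t1)..t, (((d : ℝ) * X τ^2 + Z τ^2) - 1)))
      positivity
    have hle : Z (min a t1) *
          Real.exp (-(∫ τ in (min a t1)..(min a t1), (((d : ℝ) * X τ^2 + Z τ^2) - 1))) ≤
        Z t1 * Real.exp (-(∫ τ in (min a t1)..t1, (((d : ℝ) * X τ^2 + Z τ^2) - 1))) :=
      hmono hcs ht1 (min_le_right a t1)
    rw [intervalIntegral.integral_same, neg_zero, Real.exp_zero, mul_one] at hle
    nlinarith [Real.exp_pos (-(∫ τ in (min a t1)..t1, (((d : ℝ) * X τ^2 + Z τ^2) - 1)))]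
  -- Step 3: `X` is integrable on every `Iic t`, `t < tmax`, and FTC for `I`
  have hXint : ∀ t ∈ Set.Iio tmax, IntegrableOn X (Set.Iic t) := by
    intro t ht
    rcases le_total t T0 with h | h
    · exact hint.mono_set (Set.Iic_subset_Iic.mpr h)
    · have hsub : Set.Icc T0 t ⊆ Set.Iio tmax := fun x hx => lt_of_le_of_lt hx.2 ht
      have h1 : IntegrableOn X (Set.Icc T0 t) := (hXco.mono hsub).integrableOn_Icc
      refine (hint.union h1).mono_set ?_
      intro x hx
      rcases le_total x T0 with h' | h'
      · exact Or.inl h'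
      · exact Or.inr ⟨h', hx⟩
  have hId : ∀ t ∈ Set.Iio tmax,
      HasDerivAt (fun u => ∫ τ in Set.Iic u, X τ) (X t) t := by
    intro t ht
    have h1 : HasDerivAt (fun u => (∫ τ in Set.Iic T0, X τ) + ∫ τ in T0..u, X τ) (X t) t :=
      (keyInt T0 hT0 X hXco t ht).const_add _
    refine h1.congr_of_eventuallyEq ?_
    filter_upwards [hopen.mem_nhds ht] with u hu
    have h2 := intervalIntegral.integral_Iic_sub_Iic hint (hXint u hu)
    linarith
  -- Step 4: derivative of `𝓛`
  have hLd : ∀ t ∈ Set.Iio tmax,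
      HasDerivAt (fun u => lam * Real.exp (∫ τ in Set.Iic u, X τ) * Y u)
        ((lam * Real.exp (∫ τ in Set.Iic t, X τ) * Y t) * ((d : ℝ) * X t^2 + Z t^2)) t := by
    intro t ht
    have hE := (hId t ht).exp
    have h1 := (hE.const_mul lam).mul (hode t ht).2.1
    refine h1.congr_deriv ?_
    ring
  have hLpos : ∀ t ∈ Set.Iio tmax,
      0 < lam * Real.exp (∫ τ in Set.Iic t, X τ) * Y t := fun t ht =>
    mul_pos (mul_pos hlam (Real.exp_pos _)) (hYpos t ht)
  -- Strict monotonicity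
  have hsm : StrictMonoOn (fun t => lam * Real.exp (∫ τ in Set.Iic t, X τ) * Y t)
      (Set.Iio tmax) := by
    refine strictMonoOn_of_deriv_pos hconv
      (fun t ht => (hLd t ht).continuousAt.continuousWithinAt) (fun t ht => ?_)
    rw [hopen.interior_eq] at ht
    rw [(hLd t ht).deriv]
    have h1 := hLpos t ht
    have h2 : 0 < (d : ℝ) * X t^2 + Z t^2 := by
      have h3 := hZpos t ht
      have h4 : (0:ℝ) ≤ (d : ℝ) * X t^2 := by positivity
      nlinarith
    exact mul_pos h1 h2
  -- Step 5: integrability on `Iic T0`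
  have hF2lim : Tendsto (fun t => (d : ℝ) * X t^2 + Z t^2) atBot (𝓝 1) := by
    have h1 : Tendsto (fun t => (d : ℝ) * X t^2 + Z t^2) atBot
        (𝓝 ((d : ℝ) * 0^2 + 1^2)) := ((hlimX.pow 2).const_mul _).add (hlimZ.pow 2)
    simpa using h1
  obtain ⟨a1, ha1⟩ := eventually_atBot.mp
    (hF2lim.eventually_const_lt (by norm_num : (1/2:ℝ) < 1))
  set T1 := min a1 T0 with hT1def
  have hT1T0 : T1 ≤ T0 := min_le_right _ _
  have hIicT1s : Set.Iic T1 ⊆ Set.Iio tmax := fun x hx =>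
    lt_of_le_of_lt (le_trans hx hT1T0) hT0
  have hphid : ∀ t ∈ Set.Iio tmax, HasDerivAt
      (fun u => (lam * Real.exp (∫ τ in Set.Iic u, X τ) * Y u) * Real.exp (-(u/2)))
      ((lam * Real.exp (∫ τ in Set.Iic t, X τ) * Y t) * Real.exp (-(t/2)) *
        (((d : ℝ) * X t^2 + Z t^2) - 1/2)) t := by
    intro t ht
    have h2 : HasDerivAt (fun u : ℝ => Real.exp (-(u/2))) (Real.exp (-(t/2)) * (-(1/2))) t :=
      (((hasDerivAt_id t).div_const 2).neg).exp
    have h3 := (hLd t ht).mul h2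
    refine h3.congr_deriv ?_
    ring
  have hmono2 : MonotoneOn
      (fun u => (lam * Real.exp (∫ τ in Set.Iic u, X τ) * Y u) * Real.exp (-(u/2)))
      (Set.Iic T1) := by
    refine monotoneOn_of_deriv_nonneg (convex_Iic T1)
      (fun t ht => (hphid t (hIicT1s ht)).continuousAt.continuousWithinAt)
      (fun t ht => ?_) (fun t ht => ?_)
    · rw [interior_Iic] at ht
      have ht' : t ∈ Set.Iic T1 := Set.mem_Iic.mpr (le_of_lt (Set.mem_Iio.mp ht))
      exact (hphid t (hIicT1s ht')).differentiableAt.differentiableWithinAt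
    · rw [interior_Iic] at ht
      have ht' : t ∈ Set.Iic T1 := Set.mem_Iic.mpr (le_of_lt (Set.mem_Iio.mp ht))
      rw [(hphid t (hIicT1s ht')).deriv]
      have h1 : 1/2 < (d : ℝ) * X t^2 + Z t^2 :=
        ha1 t (le_trans (le_of_lt ht) (min_le_left _ _))
      have h2 := hLpos t (hIicT1s ht')
      have h3 := Real.exp_pos (-(t/2))
      have h4 : (0:ℝ) < ((d : ℝ) * X t^2 + Z t^2) - 1/2 := by linarith
      exact le_of_lt (mul_pos (mul_pos h2 h3) h4)
  have hbound : ∀ t ∈ Set.Iic T1, lam * Real.exp (∫ τ in Set.Iic t, X τ) * Y t ≤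
      ((lam * Real.exp (∫ τ in Set.Iic T1, X τ) * Y T1) * Real.exp (-(T1/2))) *
        Real.exp (t/2) := by
    intro t ht
    have hle := hmono2 ht (le_refl T1) ht
    have he : Real.exp (-(t/2)) * Real.exp (t/2) = 1 := by
      rw [← Real.exp_add]; simp
    calc lam * Real.exp (∫ τ in Set.Iic t, X τ) * Y t
        = lam * Real.exp (∫ τ in Set.Iic t, X τ) * Y t *
            (Real.exp (-(t/2)) * Real.exp (t/2)) := by rw [he, mul_one]
      _ = (lam * Real.exp (∫ τ in Set.Iic t, X τ) * Y t * Real.exp (-(t/2))) *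
            Real.exp (t/2) := by ring
      _ ≤ ((lam * Real.exp (∫ τ in Set.Iic T1, X τ) * Y T1) * Real.exp (-(T1/2))) *
            Real.exp (t/2) := mul_le_mul_of_nonneg_right hle (Real.exp_pos _).le
  have hLco : ContinuousOn (fun t => lam * Real.exp (∫ τ in Set.Iic t, X τ) * Y t)
      (Set.Iio tmax) := fun t ht => (hLd t ht).continuousAt.continuousWithinAt
  have hint1 : IntegrableOn (fun t => lam * Real.exp (∫ τ in Set.Iic t, X τ) * Y t)
      (Set.Iic T1) := by
    have hC : IntegrableOn
        (fun t => ((lam * Real.exp (∫ τ in Set.Iic T1, X τ) * Y T1) * Real.exp (-(T1/2))) *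
          Real.exp (t/2)) (Set.Iic T1) :=
      (integrableOn_exp_half_Iic T1).const_mul _
    refine hC.mono' ((hLco.mono hIicT1s).aestronglyMeasurable measurableSet_Iic) ?_
    refine (ae_restrict_iff' measurableSet_Iic).mpr (ae_of_all _ fun t ht => ?_)
    rw [Real.norm_of_nonneg (hLpos t (hIicT1s ht)).le]
    exact hbound t ht
  have hint2 : IntegrableOn (fun t => lam * Real.exp (∫ τ in Set.Iic t, X τ) * Y t)
      (Set.Icc T1 T0) := by
    have hsub : Set.Icc T1 T0 ⊆ Set.Iio tmax := fun x hx => lt_of_le_of_lt hx.2 hT0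
    exact (hLco.mono hsub).integrableOn_Icc
  have hintT0 : IntegrableOn (fun t => lam * Real.exp (∫ τ in Set.Iic t, X τ) * Y t)
      (Set.Iic T0) := by
    refine (hint1.union hint2).mono_set ?_
    intro x hx
    rcases le_total x T1 with h | h
    · exact Or.inl h
    · exact Or.inr ⟨h, hx⟩
  -- Step 6: positivity of the integral
  have hpos : 0 < ∫ t in Set.Iic T0, lam * Real.exp (∫ τ in Set.Iic t, X τ) * Y t := by
    rw [MeasureTheory.setIntegral_pos_iff_support_of_nonneg_ae
      ((ae_restrict_iff' measurableSet_Iic).mpr (ae_of_all _ fun t ht =>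
        (hLpos t (lt_of_le_of_lt ht hT0)).le)) hintT0]
    have hsub : Set.Iic T0 ⊆
        Function.support (fun t => lam * Real.exp (∫ τ in Set.Iic t, X τ) * Y t) ∩
          Set.Iic T0 := fun x hx => ⟨(hLpos x (lt_of_le_of_lt hx hT0)).ne', hx⟩
    refine lt_of_lt_of_le ?_ (measure_mono hsub)
    rw [Real.volume_Iic]
    exact ENNReal.zero_lt_top
  exact ⟨hsm, fun t ht => hLpos t ht, hintT0, hpos⟩
end

section
/- Let (X,Y,Z,W) be a solution of (★) on (−∞, t_max) such that: (i) Y(t) > 0 and W(t) > 0 for all t; (ii) (X,Y,Z,W)(t) → (0,0,1,0) as t → −∞; and (iii) the first integral equation holds with a constant 𝓒 > 0, where 𝓛 = g·Y and g(t) = λ·exp(∫_{−∞}^{t} X(τ)dτ) for some λ > 0 (X being integrable at −∞). Then the limit lim_{t→−∞} (1 − Z(t))/Y(t)² exists and 𝓒λ² = 2·lim_{t→−∞} (1 − Z(t))/Y(t)² − A₂. -/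
open Filter Topology MeasureTheory

private lemma monoAux {f f' : ℝ → ℝ} {b : ℝ} (hf : ∀ x ∈ Set.Iic b, HasDerivAt f (f' x) x)
    (h0 : ∀ x ∈ Set.Iio b, 0 ≤ f' x) : MonotoneOn f (Set.Iic b) := by
  apply monotoneOn_of_deriv_nonneg (convex_Iic b)
  · exact fun x hx => (hf x hx).continuousAt.continuousWithinAt
  · intro x hx
    rw [interior_Iic] at hx
    exact (hf x (Set.mem_Iic.mpr hx.out.le)).differentiableAt.differentiableWithinAt
  · intro x hx
    rw [interior_Iic] at hx
    rw [(hf x (Set.mem_Iic.mpr hx.out.le)).deriv]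
    exact h0 x hx

private lemma antiAux {f f' : ℝ → ℝ} {b : ℝ} (hf : ∀ x ∈ Set.Iic b, HasDerivAt f (f' x) x)
    (h0 : ∀ x ∈ Set.Iio b, f' x ≤ 0) : AntitoneOn f (Set.Iic b) := by
  apply antitoneOn_of_deriv_nonpos (convex_Iic b)
  · exact fun x hx => (hf x hx).continuousAt.continuousWithinAt
  · intro x hx
    rw [interior_Iic] at hx
    exact (hf x (Set.mem_Iic.mpr hx.out.le)).differentiableAt.differentiableWithinAt
  · intro x hx
    rw [interior_Iic] at hx
    rw [(hf x (Set.mem_Iic.mpr hx.out.le)).deriv]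
    exact h0 x hx

set_option maxHeartbeats 2000000 in
/-- If `(X,Y,Z,W)` solves (★) on `(−∞, t_max)` with `Y, W > 0`, limit `(0,0,1,0)` at
`−∞`, and first integral constant `𝓒 > 0` (with `𝓛 = g·Y`, `g(t) = λ·exp(∫_{−∞}^t X)`,
`λ > 0`), then `lim_{t→−∞} (1−Z)/Y²` exists and `𝓒λ² = 2·lim_{t→−∞}(1−Z)/Y² − A₂`. -/
theorem stmt13 (d : ℕ) (hd : 2 ≤ d) (q : ℝ) (tmax : ℝ) (X Y Z W : ℝ → ℝ)
    (hode : StarSystem d q X Y Z W (Set.Iio tmax))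
    (hY : ∀ t < tmax, 0 < Y t) (hW : ∀ t < tmax, 0 < W t)
    (hlimX : Tendsto X atBot (𝓝 0)) (hlimY : Tendsto Y atBot (𝓝 0))
    (hlimZ : Tendsto Z atBot (𝓝 1)) (hlimW : Tendsto W atBot (𝓝 0))
    (lam : ℝ) (hlam : 0 < lam)
    (hint : ∀ t < tmax, IntegrableOn X (Set.Iic t))
    (C : ℝ) (hC : 0 < C)
    (hfirst : ∀ t < tmax,
      (d : ℝ) * X t^2 + A2 d * Y t^2 + Z t^2 - A3 d q * W t^2
        = 1 - C * (lam * Real.exp (∫ τ in Set.Iic t, X τ) * Y t)^2) :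
    ∃ l : ℝ, Tendsto (fun t => (1 - Z t) / Y t^2) atBot (𝓝 l) ∧
      C * lam^2 = 2 * l - A2 d := by
  have hdpos : (0:ℝ) < (d:ℝ) := by exact_mod_cast Nat.lt_of_lt_of_le Nat.zero_lt_two hd
  have hA2pos : 0 < A2 d := by unfold A2; positivity
  have hA3nn : 0 ≤ A3 d q := by unfold A3; positivity
  set F : ℝ → ℝ := fun t => ∫ τ in Set.Iic t, X τ with hFdef
  -- derivatives
  have hXd : ∀ t < tmax, HasDerivAt X
      (X t * ((d : ℝ) * X t^2 + Z t^2 - 1) + (A2 d / (d : ℝ)) * Y t^2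
        - (2 * A3 d q / (d : ℝ)) * W t^2) t := fun t ht => (hode t ht).1
  have hYd : ∀ t < tmax, HasDerivAt Y (Y t * ((d : ℝ) * X t^2 + Z t^2 - X t)) t :=
    fun t ht => (hode t ht).2.1
  have hWd : ∀ t < tmax, HasDerivAt W (W t * ((d : ℝ) * X t^2 + Z t^2 - 2*X t + Z t)) t :=
    fun t ht => (hode t ht).2.2.2
  have hXcont : ContinuousOn X (Set.Iio tmax) := fun t ht =>
    ((hXd t ht).continuousAt).continuousWithinAt
  -- FTC-1 preparation
  have key : ∀ a, a < tmax → ∀ s, s ≤ a → F s = F a - ∫ x in s..a, X x := by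
    intro a ha s hs
    have h := intervalIntegral.integral_Iic_sub_Iic (hint s (lt_of_le_of_lt hs ha)) (hint a ha)
    simp only [hFdef]
    linarith [h]
  have hF' : ∀ t < tmax, HasDerivAt F (X t) t := by
    intro t ht
    set a := (t + tmax)/2 with hadef
    have hta : t < a := by simp only [hadef]; linarith
    have hat : a < tmax := by simp only [hadef]; linarith
    have hii : IntervalIntegrable X MeasureTheory.volume t a := by
      apply MeasureTheory.IntegrableOn.intervalIntegrable
      apply (hint a hat).mono_set
      rw [Set.uIcc_of_le hta.le]
      exact Set.Icc_subset_Iic_self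
    have hmeas : StronglyMeasurableAtFilter X (𝓝 t) MeasureTheory.volume :=
      hXcont.stronglyMeasurableAtFilter isOpen_Iio t ht
    have hd1 : HasDerivAt (fun u => ∫ x in u..a, X x) (-X t) t :=
      intervalIntegral.integral_hasDerivAt_left hii hmeas ((hXd t ht).continuousAt)
    have hd2 : HasDerivAt (fun u => F a - ∫ x in u..a, X x) (X t) t := by
      simpa using (hd1.const_sub (F a))
    apply hd2.congr_of_eventuallyEq
    filter_upwards [Iio_mem_nhds hta] with s hs
    exact key a hat s hs.le
  have hFlim : Tendsto F atBot (𝓝 0) := by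
    have ha : tmax - 1 < tmax := by linarith
    have h1 : Tendsto (fun s => ∫ x in s..(tmax - 1), X x) atBot (𝓝 (F (tmax - 1))) :=
      intervalIntegral_tendsto_integral_Iic (tmax - 1) (hint _ ha) tendsto_id
    have h2 : Tendsto (fun s => F (tmax - 1) - ∫ x in s..(tmax - 1), X x) atBot (𝓝 0) := by
      have h2 := h1.const_sub (F (tmax - 1))
      rwa [sub_self] at h2
    apply h2.congr'
    rw [Filter.eventuallyEq_iff_exists_mem]
    exact ⟨Set.Iic (tmax - 1), Iic_mem_atBot _, fun s hs => (key _ ha s hs).symm⟩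
  have hQlim : Tendsto (fun t => (d:ℝ) * X t^2 + Z t^2 - 1) atBot (𝓝 0) := by
    have : Tendsto (fun t => (d:ℝ) * X t^2 + Z t^2 - 1) atBot (𝓝 ((d:ℝ)*0^2 + 1^2 - 1)) :=
      (((hlimX.pow 2).const_mul ((d:ℝ))).add (hlimZ.pow 2)).sub tendsto_const_nhds
    simpa using this
  -- choose base point t₁
  have hev : ∀ᶠ t in atBot, |X t| ≤ 1/8 ∧ |Z t - 1| ≤ 1/8 ∧
      |(d:ℝ) * X t^2 + Z t^2 - 1| ≤ 1/8 ∧ |F t| ≤ 1 := by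
    have e1 := Metric.tendsto_nhds.mp hlimX (1/8) (by norm_num)
    have e2 := Metric.tendsto_nhds.mp hlimZ (1/8) (by norm_num)
    have e3 := Metric.tendsto_nhds.mp hQlim (1/8) (by norm_num)
    have e4 := Metric.tendsto_nhds.mp hFlim 1 one_pos
    filter_upwards [e1, e2, e3, e4] with t h1 h2 h3 h4
    rw [Real.dist_eq] at h1 h2 h3 h4
    simp only [sub_zero] at h1 h3 h4
    exact ⟨h1.le, h2.le, h3.le, h4.le⟩
  obtain ⟨b, hb⟩ := eventually_atBot.mp hev
  set t₁ : ℝ := min b (tmax - 1) with ht₁def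
  have ht₁ : t₁ < tmax := lt_of_le_of_lt (min_le_right _ _) (by linarith)
  have hbnd : ∀ t ≤ t₁, t < tmax ∧ |X t| ≤ 1/8 ∧ |Z t - 1| ≤ 1/8 ∧
      |(d:ℝ) * X t^2 + Z t^2 - 1| ≤ 1/8 ∧ |F t| ≤ 1 :=
    fun t ht => ⟨lt_of_le_of_lt ht ht₁, hb t (le_trans ht (min_le_left _ _))⟩
  -- exponential decay of Y backwards
  have hmonoY : MonotoneOn (fun t => Y t * Real.exp (-(t/2))) (Set.Iic t₁) := by
    apply monoAux (f' := fun x => Y x * ((d:ℝ) * X x^2 + Z x^2 - X x) * Real.exp (-(x/2))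
      + Y x * (Real.exp (-(x/2)) * -(1/2)))
    · intro x hx
      have hx' : x < tmax := (hbnd x hx).1
      have h1 : HasDerivAt (fun t : ℝ => Real.exp (-(t/2))) (Real.exp (-(x/2)) * -(1/2)) x := by
        have h0 : HasDerivAt (fun t : ℝ => -(t/2)) (-(1/2)) x := ((hasDerivAt_id x).div_const 2).neg
        simpa using h0.exp
      exact (hYd x hx').mul h1
    · intro x hx
      obtain ⟨hx', hX8, hZ8, hQ8, _⟩ := hbnd x hx.out.le
      have hy := hY x hx'
      have he := Real.exp_pos (-(x/2))
      rw [abs_le] at hX8 hQ8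
      nlinarith [hy, he, mul_pos hy he]
  have hYb : ∀ t ≤ t₁, Y t ≤ Y t₁ * Real.exp ((t - t₁)/2) := by
    intro t ht
    have h := hmonoY (Set.mem_Iic.mpr ht) (Set.mem_Iic.mpr le_rfl) ht
    have h2 := mul_le_mul_of_nonneg_right h (Real.exp_pos (t/2)).le
    have e1 : Real.exp (-(t/2)) * Real.exp (t/2) = 1 := by
      rw [← Real.exp_add]; norm_num
    have e2 : Real.exp (-(t₁/2)) * Real.exp (t/2) = Real.exp ((t - t₁)/2) := by
      rw [← Real.exp_add]; ring_nf
    calc Y t = Y t * (Real.exp (-(t/2)) * Real.exp (t/2)) := by rw [e1]; ring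
    _ ≤ Y t₁ * (Real.exp (-(t₁/2)) * Real.exp (t/2)) := by
        rw [← mul_assoc, ← mul_assoc]; exact h2
    _ = Y t₁ * Real.exp ((t - t₁)/2) := by rw [e2]
  -- exponential decay of W/Y backwards
  have hmonoV : MonotoneOn (fun t => W t / Y t * Real.exp (-(t/2))) (Set.Iic t₁) := by
    apply monoAux (f' := fun x =>
      (W x * ((d:ℝ) * X x^2 + Z x^2 - 2*X x + Z x) * Y x
        - W x * (Y x * ((d:ℝ) * X x^2 + Z x^2 - X x))) / Y x ^ 2 * Real.exp (-(x/2))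
      + W x / Y x * (Real.exp (-(x/2)) * -(1/2)))
    · intro x hx
      have hx' : x < tmax := (hbnd x hx).1
      have h1 : HasDerivAt (fun t : ℝ => Real.exp (-(t/2))) (Real.exp (-(x/2)) * -(1/2)) x := by
        have h0 : HasDerivAt (fun t : ℝ => -(t/2)) (-(1/2)) x := ((hasDerivAt_id x).div_const 2).neg
        simpa using h0.exp
      exact ((hWd x hx').div (hYd x hx') (hY x hx').ne').mul h1
    · intro x hx
      obtain ⟨hx', hX8, hZ8, hQ8, _⟩ := hbnd x hx.out.le
      have hy := hY x hx'
      have hw := hW x hx'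
      have he := Real.exp_pos (-(x/2))
      rw [abs_le] at hX8 hZ8
      have hkey : (W x * ((d:ℝ) * X x^2 + Z x^2 - 2*X x + Z x) * Y x
          - W x * (Y x * ((d:ℝ) * X x^2 + Z x^2 - X x))) / Y x ^ 2 * Real.exp (-(x/2))
          + W x / Y x * (Real.exp (-(x/2)) * -(1/2))
          = W x / Y x * (Z x - X x - 1/2) * Real.exp (-(x/2)) := by
        field_simp
        ring
      rw [hkey]
      apply mul_nonneg (mul_nonneg (div_nonneg hw.le hy.le) (by linarith)) he.le
  have hvb : ∀ t ≤ t₁, W t / Y t ≤ W t₁ / Y t₁ * Real.exp ((t - t₁)/2) := by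
    intro t ht
    have h := hmonoV (Set.mem_Iic.mpr ht) (Set.mem_Iic.mpr le_rfl) ht
    have h2 := mul_le_mul_of_nonneg_right h (Real.exp_pos (t/2)).le
    have e1 : Real.exp (-(t/2)) * Real.exp (t/2) = 1 := by
      rw [← Real.exp_add]; norm_num
    have e2 : Real.exp (-(t₁/2)) * Real.exp (t/2) = Real.exp ((t - t₁)/2) := by
      rw [← Real.exp_add]; ring_nf
    calc W t / Y t = W t / Y t * (Real.exp (-(t/2)) * Real.exp (t/2)) := by rw [e1]; ring
    _ ≤ W t₁ / Y t₁ * (Real.exp (-(t₁/2)) * Real.exp (t/2)) := by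
        rw [← mul_assoc, ← mul_assoc]; exact h2
    _ = W t₁ / Y t₁ * Real.exp ((t - t₁)/2) := by rw [e2]
  set vb : ℝ := W t₁ / Y t₁ with hvbdef
  have hvbpos : 0 < vb := div_pos (hW t₁ ht₁) (hY t₁ ht₁)
  have hexp_le_one : ∀ t ≤ t₁, Real.exp ((t - t₁)/2) ≤ 1 := fun t ht =>
    Real.exp_le_one_iff.mpr (by linarith)
  have hWle : ∀ t ≤ t₁, W t ≤ vb * Y t := by
    intro t ht
    have hx' : t < tmax := (hbnd t ht).1
    have h := hvb t ht
    have h2 : W t / Y t ≤ vb := le_trans h (by nlinarith [hexp_le_one t ht, hvbpos])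
    calc W t = W t / Y t * Y t := (div_mul_cancel₀ _ (hY t hx').ne').symm
    _ ≤ vb * Y t := mul_le_mul_of_nonneg_right h2 (hY t hx').le
  have hv0 : Tendsto (fun t => W t / Y t) atBot (𝓝 0) := by
    have hb0 : Tendsto (fun t : ℝ => vb * Real.exp ((t - t₁)/2)) atBot (𝓝 0) := by
      have h1 : Tendsto (fun t : ℝ => (t - t₁)/2) atBot atBot :=
        (tendsto_atBot_add_const_right _ (-t₁) tendsto_id).atBot_div_const two_pos
      have h2 := Real.tendsto_exp_atBot.comp h1
      simpa using h2.const_mul vb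
    apply tendsto_of_tendsto_of_tendsto_of_le_of_le' tendsto_const_nhds hb0
    · filter_upwards [Iic_mem_atBot t₁] with t ht
      exact (div_pos (hW t (hbnd t ht).1) (hY t (hbnd t ht).1)).le
    · filter_upwards [Iic_mem_atBot t₁] with t ht
      exact hvb t ht
  -- identity for Q from the first integral
  have hQid : ∀ t < tmax, (d:ℝ) * X t^2 + Z t^2 - 1
      = A3 d q * W t^2 - A2 d * Y t^2 - C * (lam * Real.exp (F t) * Y t)^2 := by
    intro t ht
    have h := hfirst t ht
    simp only [hFdef]
    linear_combination h
  -- bounds on squares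
  have hY2 : ∀ t ≤ t₁, Y t^2 ≤ Y t₁^2 * Real.exp (t - t₁) := by
    intro t ht
    have h := hYb t ht
    have hy := (hY t (hbnd t ht).1).le
    have hee : Real.exp ((t - t₁)/2) * Real.exp ((t - t₁)/2) = Real.exp (t - t₁) := by
      rw [← Real.exp_add]; ring_nf
    nlinarith [Real.exp_pos ((t - t₁)/2), hY t₁ ht₁]
  have hW2 : ∀ t ≤ t₁, W t^2 ≤ vb^2 * Y t^2 := by
    intro t ht
    have h := hWle t ht
    have hw := (hW t (hbnd t ht).1).le
    nlinarith [hY t (hbnd t ht).1]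
  have hg2 : ∀ t ≤ t₁, (lam * Real.exp (F t))^2 ≤ lam^2 * Real.exp 2 := by
    intro t ht
    have hF1 : F t ≤ 1 := le_of_abs_le (hbnd t ht).2.2.2.2
    have h1 : Real.exp (F t) ≤ Real.exp 1 := Real.exp_le_exp.mpr hF1
    have h2 : Real.exp 1 * Real.exp 1 = Real.exp 2 := by rw [← Real.exp_add]; norm_num
    have h3 : Real.exp (F t)^2 ≤ Real.exp 1^2 := by nlinarith [Real.exp_pos (F t)]
    nlinarith [sq_nonneg lam, h3, h2]
  -- bound |Q| ≤ M * exp t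
  set M2 : ℝ := A2 d + C * lam^2 * Real.exp 2 + A3 d q * vb^2 with hM2def
  have hM2pos : 0 < M2 := by
    rw [hM2def]
    have h1 : 0 < C * lam^2 * Real.exp 2 := by positivity
    have h2 : 0 ≤ A3 d q * vb^2 := mul_nonneg hA3nn (sq_nonneg vb)
    linarith
  have hQb2 : ∀ t ≤ t₁, |(d:ℝ) * X t^2 + Z t^2 - 1| ≤ M2 * Y t^2 := by
    intro t ht
    have hid := hQid t (hbnd t ht).1
    have h1 := hW2 t ht
    have h2 := hg2 t ht
    have hy2 : (0:ℝ) ≤ Y t^2 := sq_nonneg _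
    have e1 : C * (lam * Real.exp (F t) * Y t)^2 = C * (lam * Real.exp (F t))^2 * Y t^2 := by
      ring
    have e2 : C * (lam * Real.exp (F t))^2 * Y t^2 ≤ C * (lam^2 * Real.exp 2) * Y t^2 :=
      mul_le_mul_of_nonneg_right (mul_le_mul_of_nonneg_left h2 hC.le) hy2
    have e3 : A3 d q * W t^2 ≤ A3 d q * (vb^2 * Y t^2) := mul_le_mul_of_nonneg_left h1 hA3nn
    have e4 : 0 ≤ A3 d q * W t^2 := mul_nonneg hA3nn (sq_nonneg _)
    have e5 : 0 ≤ C * (lam * Real.exp (F t))^2 * Y t^2 := by positivity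
    have e6 : 0 ≤ A3 d q * (vb^2 * Y t^2) := mul_nonneg hA3nn (mul_nonneg (sq_nonneg _) hy2)
    have e7 : 0 ≤ A2 d * Y t^2 := mul_nonneg hA2pos.le hy2
    have em : M2 * Y t^2 = A2 d * Y t^2 + C * (lam^2 * Real.exp 2) * Y t^2
        + A3 d q * (vb^2 * Y t^2) := by rw [hM2def]; ring
    rw [abs_le]
    constructor
    · rw [hid, e1]; linarith
    · rw [hid, e1]; linarith
  set M : ℝ := M2 * Y t₁^2 * Real.exp (-t₁) with hMdef
  have hMpos : 0 < M := by
    rw [hMdef]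
    have := hY t₁ ht₁
    have := Real.exp_pos (-t₁)
    positivity
  have hQb : ∀ t ≤ t₁, |(d:ℝ) * X t^2 + Z t^2 - 1| ≤ M * Real.exp t := by
    intro t ht
    refine le_trans (hQb2 t ht) ?_
    have h := hY2 t ht
    have he : Real.exp (t - t₁) = Real.exp (-t₁) * Real.exp t := by
      rw [← Real.exp_add]; ring_nf
    calc M2 * Y t^2 ≤ M2 * (Y t₁^2 * Real.exp (t - t₁)) :=
          mul_le_mul_of_nonneg_left h hM2pos.le
    _ = M * Real.exp t := by rw [hMdef, he]; ring
  -- the renormalized function E = Y · exp(F - t)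
  set E : ℝ → ℝ := fun t => Y t * Real.exp (F t - t) with hEdef
  have hEpos : ∀ t < tmax, 0 < E t := fun t ht => mul_pos (hY t ht) (Real.exp_pos _)
  have hEd : ∀ t < tmax, HasDerivAt E (E t * ((d:ℝ) * X t^2 + Z t^2 - 1)) t := by
    intro t ht
    have h1 : HasDerivAt (fun s => F s - s) (X t - 1) t := (hF' t ht).sub (hasDerivAt_id t)
    have h2 : HasDerivAt (fun s => Real.exp (F s - s)) (Real.exp (F t - t) * (X t - 1)) t := by
      simpa using h1.exp
    have h3 := (hYd t ht).mul h2
    refine h3.congr_deriv ?_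
    simp only [hEdef]
    ring
  -- lower bound for E
  have hantiE : AntitoneOn (fun t => E t * Real.exp (-(M * Real.exp t))) (Set.Iic t₁) := by
    apply antiAux (f' := fun x => E x * ((d:ℝ) * X x^2 + Z x^2 - 1) * Real.exp (-(M * Real.exp x))
      + E x * (Real.exp (-(M * Real.exp x)) * -(M * Real.exp x)))
    · intro x hx
      have hx' : x < tmax := (hbnd x hx).1
      have h1 : HasDerivAt (fun s : ℝ => -(M * Real.exp s)) (-(M * Real.exp x)) x :=
        ((Real.hasDerivAt_exp x).const_mul M).neg
      exact (hEd x hx').mul h1.exp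
    · intro x hx
      have hx' : x < tmax := (hbnd x hx.out.le).1
      have hq := hQb x hx.out.le
      have hE := hEpos x hx'
      have heM := Real.exp_pos (-(M * Real.exp x))
      rw [abs_le] at hq
      have : E x * ((d:ℝ) * X x^2 + Z x^2 - 1) * Real.exp (-(M * Real.exp x))
          + E x * (Real.exp (-(M * Real.exp x)) * -(M * Real.exp x))
          = E x * Real.exp (-(M * Real.exp x))
            * (((d:ℝ) * X x^2 + Z x^2 - 1) - M * Real.exp x) := by ring
      rw [this]
      apply mul_nonpos_of_nonneg_of_nonpos (mul_pos hE heM).le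
      linarith [hq.2]
  set Elo : ℝ := E t₁ * Real.exp (-(M * Real.exp t₁)) with hElodef
  have hElopos : 0 < Elo := mul_pos (hEpos t₁ ht₁) (Real.exp_pos _)
  have hElo : ∀ t ≤ t₁, Elo ≤ E t := by
    intro t ht
    have h := hantiE (Set.mem_Iic.mpr ht) (Set.mem_Iic.mpr le_rfl) ht
    have h2 : Real.exp (-(M * Real.exp t)) ≤ 1 :=
      Real.exp_le_one_iff.mpr (by nlinarith [Real.exp_pos t, hMpos])
    have hE := hEpos t (hbnd t ht).1
    calc Elo ≤ E t * Real.exp (-(M * Real.exp t)) := h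
    _ ≤ E t * 1 := mul_le_mul_of_nonneg_left h2 hE.le
    _ = E t := mul_one _
  -- the function φ = X / E
  set φ : ℝ → ℝ := fun t => X t / E t with hφdef
  have hφd : ∀ t < tmax, HasDerivAt φ
      ((A2 d / (d:ℝ) * Y t^2 - 2 * A3 d q / (d:ℝ) * W t^2) / E t) t := by
    intro t ht
    have hne := (hEpos t ht).ne'
    have h := (hXd t ht).div (hEd t ht) hne
    refine h.congr_deriv ?_
    field_simp
    ring
  have hφlim : Tendsto φ atBot (𝓝 0) := by
    have habs : Tendsto (fun t => |X t| / Elo) atBot (𝓝 0) := by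
      have := (hlimX.abs).div_const Elo
      simpa using this
    apply tendsto_of_tendsto_of_tendsto_of_le_of_le' (by simpa using habs.neg) habs
    · filter_upwards [Iic_mem_atBot t₁] with t ht
      have hE := hEpos t (hbnd t ht).1
      have h2 : |φ t| ≤ |X t| / Elo := by
        rw [hφdef]
        simp only [abs_div, abs_of_pos hE]
        exact div_le_div_of_nonneg_left (abs_nonneg _) hElopos (hElo t ht)
      simpa using (abs_le.mp h2).1
    · filter_upwards [Iic_mem_atBot t₁] with t ht
      have hE := hEpos t (hbnd t ht).1
      have h2 : |φ t| ≤ |X t| / Elo := by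
        rw [hφdef]
        simp only [abs_div, abs_of_pos hE]
        exact div_le_div_of_nonneg_left (abs_nonneg _) hElopos (hElo t ht)
      exact (abs_le.mp h2).2
  -- bound on the derivative of φ
  set c1 : ℝ := A2 d / (d:ℝ) + 2 * A3 d q / (d:ℝ) * vb^2 with hc1def
  have hc1nn : 0 ≤ c1 := by
    rw [hc1def]
    have h1 : 0 ≤ A2 d / (d:ℝ) := div_nonneg hA2pos.le hdpos.le
    have h2 : 0 ≤ 2 * A3 d q / (d:ℝ) * vb^2 :=
      mul_nonneg (div_nonneg (by linarith) hdpos.le) (sq_nonneg _)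
    linarith
  set K3 : ℝ := c1 * Y t₁ * Real.exp (1 - t₁/2) with hK3def
  have hK3nn : 0 ≤ K3 := by
    rw [hK3def]
    exact mul_nonneg (mul_nonneg hc1nn (hY t₁ ht₁).le) (Real.exp_pos _).le
  have hηb : ∀ x ≤ t₁, |(A2 d / (d:ℝ) * Y x^2 - 2 * A3 d q / (d:ℝ) * W x^2) / E x|
      ≤ K3 * Real.exp ((3/2)*x) := by
    intro x hx
    have hx' : x < tmax := (hbnd x hx).1
    have hyp := hY x hx'
    have hE := hEpos x hx'
    rw [abs_div, abs_of_pos hE, div_le_iff₀ hE]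
    have h1 : |A2 d / (d:ℝ) * Y x^2 - 2 * A3 d q / (d:ℝ) * W x^2| ≤ c1 * Y x^2 := by
      have hw2 := hW2 x hx
      have e1 : 0 ≤ A2 d / (d:ℝ) * Y x^2 :=
        mul_nonneg (div_nonneg hA2pos.le hdpos.le) (sq_nonneg _)
      have e2 : 0 ≤ 2 * A3 d q / (d:ℝ) := div_nonneg (by linarith) hdpos.le
      have e3 : 2 * A3 d q / (d:ℝ) * W x^2 ≤ 2 * A3 d q / (d:ℝ) * (vb^2 * Y x^2) :=
        mul_le_mul_of_nonneg_left hw2 e2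
      have e4 : 0 ≤ 2 * A3 d q / (d:ℝ) * W x^2 := mul_nonneg e2 (sq_nonneg _)
      have em : c1 * Y x^2 = A2 d / (d:ℝ) * Y x^2 + 2 * A3 d q / (d:ℝ) * (vb^2 * Y x^2) := by
        rw [hc1def]; ring
      rw [abs_le]
      constructor <;> linarith
    have h3 : c1 * Y x ≤ K3 * Real.exp (x/2 - 1) := by
      have hyb := hYb x hx
      have he : Real.exp (1 - t₁/2) * Real.exp (x/2 - 1) = Real.exp ((x - t₁)/2) := by
        rw [← Real.exp_add]; ring_nf
      calc c1 * Y x ≤ c1 * (Y t₁ * Real.exp ((x - t₁)/2)) := mul_le_mul_of_nonneg_left hyb hc1nn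
      _ = K3 * Real.exp (x/2 - 1) := by rw [hK3def, ← he]; ring
    have h2 : Y x * Real.exp (-1 - x) ≤ E x := by
      have hF1 : -1 ≤ F x := neg_le_of_abs_le (hbnd x hx).2.2.2.2
      have : Real.exp (-1 - x) ≤ Real.exp (F x - x) := Real.exp_le_exp.mpr (by linarith)
      exact mul_le_mul_of_nonneg_left this hyp.le
    have he2 : Real.exp ((3/2)*x) * Real.exp (-1 - x) = Real.exp (x/2 - 1) := by
      rw [← Real.exp_add]; ring_nf
    calc |A2 d / (d:ℝ) * Y x^2 - 2 * A3 d q / (d:ℝ) * W x^2| ≤ c1 * Y x^2 := h1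
    _ = (c1 * Y x) * Y x := by ring
    _ ≤ (K3 * Real.exp (x/2 - 1)) * Y x := mul_le_mul_of_nonneg_right h3 hyp.le
    _ = K3 * Real.exp ((3/2)*x) * (Y x * Real.exp (-1 - x)) := by rw [← he2]; ring
    _ ≤ K3 * Real.exp ((3/2)*x) * E x :=
        mul_le_mul_of_nonneg_left h2 (mul_nonneg hK3nn (Real.exp_pos _).le)
  set c2 : ℝ := (2/3) * K3 with hc2def
  have hc2nn : 0 ≤ c2 := by rw [hc2def]; linarith
  have hexpd : ∀ x : ℝ, HasDerivAt (fun s : ℝ => c2 * Real.exp ((3/2)*s))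
      (K3 * Real.exp ((3/2)*x)) x := by
    intro x
    have h0 : HasDerivAt (fun s : ℝ => (3/2 : ℝ) * s) (3/2 : ℝ) x := by
      simpa using (hasDerivAt_id x).const_mul (3/2 : ℝ)
    have h1 := (h0.exp).const_mul c2
    refine h1.congr_deriv ?_
    rw [hc2def]; ring
  have hmonoP : MonotoneOn (fun x => φ x + c2 * Real.exp ((3/2)*x)) (Set.Iic t₁) := by
    apply monoAux (f' := fun x =>
      (A2 d / (d:ℝ) * Y x^2 - 2 * A3 d q / (d:ℝ) * W x^2) / E x + K3 * Real.exp ((3/2)*x))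
    · intro x hx
      exact (hφd x (hbnd x hx).1).add (hexpd x)
    · intro x hx
      have := abs_le.mp (hηb x hx.out.le)
      linarith [this.1]
  have hantiP : AntitoneOn (fun x => φ x - c2 * Real.exp ((3/2)*x)) (Set.Iic t₁) := by
    apply antiAux (f' := fun x =>
      (A2 d / (d:ℝ) * Y x^2 - 2 * A3 d q / (d:ℝ) * W x^2) / E x - K3 * Real.exp ((3/2)*x))
    · intro x hx
      exact (hφd x (hbnd x hx).1).sub (hexpd x)
    · intro x hx
      have := abs_le.mp (hηb x hx.out.le)
      linarith [this.2]
  have hexp32 : Tendsto (fun s : ℝ => Real.exp ((3/2)*s)) atBot (𝓝 0) := by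
    apply Real.tendsto_exp_atBot.comp
    exact Tendsto.const_mul_atBot (by norm_num) tendsto_id
  have hφb : ∀ t ≤ t₁, |φ t| ≤ c2 * Real.exp ((3/2)*t) := by
    intro t ht
    rw [abs_le]
    constructor
    · have hlim2 : Tendsto (fun s => φ s + c2 * Real.exp ((3/2)*s)) atBot (𝓝 0) := by
        have := hφlim.add (hexp32.const_mul c2)
        simpa using this
      have hev2 : ∀ᶠ s in atBot, φ s + c2 * Real.exp ((3/2)*s) ≤ φ t + c2 * Real.exp ((3/2)*t) := by
        filter_upwards [Iic_mem_atBot t] with s hs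
        exact hmonoP (Set.mem_Iic.mpr (le_trans hs ht)) (Set.mem_Iic.mpr ht) hs
      have := le_of_tendsto hlim2 hev2
      linarith
    · have hlim2 : Tendsto (fun s => φ s - c2 * Real.exp ((3/2)*s)) atBot (𝓝 0) := by
        have := hφlim.sub (hexp32.const_mul c2)
        simpa using this
      have hev2 : ∀ᶠ s in atBot, φ t - c2 * Real.exp ((3/2)*t) ≤ φ s - c2 * Real.exp ((3/2)*s) := by
        filter_upwards [Iic_mem_atBot t] with s hs
        exact hantiP (Set.mem_Iic.mpr (le_trans hs ht)) (Set.mem_Iic.mpr ht) hs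
      have := ge_of_tendsto hlim2 hev2
      linarith
  -- bound on X / Y
  have hXYeq : ∀ t ≤ t₁, X t / Y t = φ t * Real.exp (F t - t) := by
    intro t ht
    have hyne := (hY t (hbnd t ht).1).ne'
    have hene := (Real.exp_pos (F t - t)).ne'
    rw [hφdef]
    simp only [hEdef]
    field_simp
  have hub : ∀ t ≤ t₁, |X t / Y t| ≤ c2 * Real.exp 1 * Real.exp (t/2) := by
    intro t ht
    rw [hXYeq t ht, abs_mul, Real.abs_exp]
    have h1 : Real.exp (F t - t) ≤ Real.exp (1 - t) :=
      Real.exp_le_exp.mpr (by linarith [le_of_abs_le (hbnd t ht).2.2.2.2])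
    have he : Real.exp ((3/2)*t) * Real.exp (1 - t) = Real.exp 1 * Real.exp (t/2) := by
      rw [← Real.exp_add, ← Real.exp_add]; ring_nf
    calc |φ t| * Real.exp (F t - t) ≤ (c2 * Real.exp ((3/2)*t)) * Real.exp (1 - t) :=
        mul_le_mul (hφb t ht) h1 (Real.exp_pos _).le
          (mul_nonneg hc2nn (Real.exp_pos _).le)
    _ = c2 * Real.exp 1 * Real.exp (t/2) := by rw [mul_assoc, he]; ring
  have hu0 : Tendsto (fun t => X t / Y t) atBot (𝓝 0) := by
    have hbdd : Tendsto (fun t : ℝ => c2 * Real.exp 1 * Real.exp (t/2)) atBot (𝓝 0) := by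
      have h1 : Tendsto (fun t : ℝ => Real.exp (t/2)) atBot (𝓝 0) :=
        Real.tendsto_exp_atBot.comp (tendsto_id.atBot_div_const two_pos)
      simpa using h1.const_mul (c2 * Real.exp 1)
    apply tendsto_of_tendsto_of_tendsto_of_le_of_le' (by simpa using hbdd.neg) hbdd
    · filter_upwards [Iic_mem_atBot t₁] with t ht
      linarith [(abs_le.mp (hub t ht)).1]
    · filter_upwards [Iic_mem_atBot t₁] with t ht
      exact (abs_le.mp (hub t ht)).2
  -- final: identify (1 - Z)/Y² with the expression from the first integral
  have hz78 : ∀ t ≤ t₁, (0:ℝ) < 1 + Z t := by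
    intro t ht
    have := abs_le.mp (hbnd t ht).2.2.1
    linarith [this.1]
  have hfinal_eq : ∀ t ≤ t₁, (1 - Z t) / Y t^2
      = ((d:ℝ) * (X t / Y t)^2 + A2 d - A3 d q * (W t / Y t)^2
          + C * (lam * Real.exp (F t))^2) / (1 + Z t) := by
    intro t ht
    have hx' : t < tmax := (hbnd t ht).1
    have hyne := (hY t hx').ne'
    have hzne := (hz78 t ht).ne'
    have h := hfirst t hx'
    rw [div_eq_div_iff (pow_ne_zero 2 hyne) hzne]
    have e1 : (X t / Y t)^2 * Y t^2 = X t^2 := by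
      rw [div_pow, div_mul_cancel₀ _ (pow_ne_zero 2 hyne)]
    have e2 : (W t / Y t)^2 * Y t^2 = W t^2 := by
      rw [div_pow, div_mul_cancel₀ _ (pow_ne_zero 2 hyne)]
    have e3 : (lam * Real.exp (F t) * Y t)^2 = (lam * Real.exp (F t))^2 * Y t^2 := by ring
    simp only [hFdef] at e3 ⊢
    linear_combination (-1 : ℝ) * h - (d:ℝ) * e1 + A3 d q * e2 - C * e3
  have hglim : Tendsto (fun t => lam * Real.exp (F t)) atBot (𝓝 lam) := by
    have h1 : Tendsto (fun t => Real.exp (F t)) atBot (𝓝 1) := by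
      have := (Real.continuous_exp.tendsto 0).comp hFlim
      simpa [Function.comp_def] using this
    have := h1.const_mul lam
    simpa using this
  have hRlim : Tendsto (fun t => ((d:ℝ) * (X t / Y t)^2 + A2 d - A3 d q * (W t / Y t)^2
      + C * (lam * Real.exp (F t))^2) / (1 + Z t)) atBot
      (𝓝 (((d:ℝ) * 0^2 + A2 d - A3 d q * 0^2 + C * lam^2) / (1 + 1))) := by
    apply Tendsto.div _ (tendsto_const_nhds.add hlimZ) (by norm_num)
    have hnum : Tendsto (fun t => (d:ℝ) * (X t / Y t)^2 + A2 d - A3 d q * (W t / Y t)^2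
        + C * (lam * Real.exp (F t))^2) atBot
        (𝓝 ((d:ℝ) * 0^2 + A2 d - A3 d q * 0^2 + C * lam^2)) := by
      have h1 := ((hu0.pow 2).const_mul (d:ℝ)).add (tendsto_const_nhds (x := A2 d))
      have h2 := h1.sub ((hv0.pow 2).const_mul (A3 d q))
      have h3 := h2.add ((hglim.pow 2).const_mul C)
      convert h3 using 2
    exact hnum
  refine ⟨((d:ℝ) * 0^2 + A2 d - A3 d q * 0^2 + C * lam^2) / (1 + 1), ?_, by push_cast; ring⟩
  apply hRlim.congr'
  rw [Filter.eventuallyEq_iff_exists_mem]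
  exact ⟨Set.Iic t₁, Iic_mem_atBot _, fun t ht => (hfinal_eq t ht).symm⟩
end

section
/- Let (X,Y,Z,W) be a solution of (★) on (−∞, t_max) such that: (i) Y(t) > 0 and W(t) > 0 for all t; (ii) (X,Y,Z,W)(t) → (0,0,1,0) as t → −∞; and (iii) the first integral equation holds with a constant 𝓒 > 0. Then negativity of X and of Z − X is forward invariant: if X(t₀) < 0 for some t₀ ∈ (−∞, t_max) then X(t) < 0 for all t ∈ (t₀, t_max), and if (Z − X)(t₀) < 0 for some t₀ ∈ (−∞, t_max) then (Z − X)(t) < 0 for all t ∈ (t₀, t_max). In particular, the limits lim_{t→t_max} g(t) and lim_{t→t_max} W(t)/Y(t) exist in the extended real numbers [−∞, +∞]. -/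
open Filter Topology MeasureTheory

lemma aux_slope_right {f : ℝ → ℝ} {f' a b : ℝ} (hab : a < b)
    (hf : HasDerivAt f f' a) (h0 : f a = 0) (hneg : ∀ t ∈ Set.Ioo a b, f t < 0) : f' ≤ 0 := by
  have h1 : Tendsto (slope f a) (𝓝[>] a) (𝓝 f') :=
    (hasDerivAt_iff_tendsto_slope.1 hf).mono_left
      (nhdsWithin_mono a fun x hx => Set.mem_compl_singleton_iff.mpr (ne_of_gt hx))
  refine le_of_tendsto h1 ?_
  filter_upwards [Ioo_mem_nhdsGT_of_mem (Set.left_mem_Ico.2 hab)] with t ht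
  rw [slope_def_field]
  exact div_nonpos_iff.2 (Or.inr ⟨by rw [h0]; linarith [hneg t ht], by linarith [ht.1]⟩)

lemma aux_slope_left {f : ℝ → ℝ} {f' a b : ℝ} (hab : a < b)
    (hf : HasDerivAt f f' b) (h0 : f b = 0) (hneg : ∀ t ∈ Set.Ioo a b, f t < 0) : 0 ≤ f' := by
  have h1 : Tendsto (slope f b) (𝓝[<] b) (𝓝 f') :=
    (hasDerivAt_iff_tendsto_slope.1 hf).mono_left
      (nhdsWithin_mono b fun x hx => Set.mem_compl_singleton_iff.mpr (ne_of_lt hx))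
  refine ge_of_tendsto h1 ?_
  filter_upwards [Ioo_mem_nhdsLT_of_mem (Set.mem_Ioc.2 ⟨hab, le_rfl⟩)] with t ht
  rw [slope_def_field]
  exact div_nonneg_iff.2 (Or.inr ⟨by rw [h0]; linarith [hneg t ht], by linarith [ht.2]⟩)

lemma aux_first_zero {v : ℝ → ℝ} {tmax t₁ t₂ : ℝ} (hc : ∀ t < tmax, ContinuousAt v t)
    (h12 : t₁ < t₂) (h2 : t₂ < tmax) (h1 : v t₁ < 0) (h2v : 0 ≤ v t₂) :
    ∃ τ, t₁ < τ ∧ τ ≤ t₂ ∧ v τ = 0 ∧ ∀ t, t₁ ≤ t → t < τ → v t < 0 := by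
  have hKclosed : IsClosed (Set.Icc t₁ t₂ ∩ v ⁻¹' Set.Ici 0) :=
    ContinuousOn.preimage_isClosed_of_isClosed
      (fun x hx => (hc x (lt_of_le_of_lt hx.2 h2)).continuousWithinAt) isClosed_Icc isClosed_Ici
  have hKne : (Set.Icc t₁ t₂ ∩ v ⁻¹' Set.Ici 0).Nonempty := ⟨t₂, ⟨h12.le, le_rfl⟩, h2v⟩
  have hKbdd : BddBelow (Set.Icc t₁ t₂ ∩ v ⁻¹' Set.Ici 0) := ⟨t₁, fun x hx => hx.1.1⟩
  set τ := sInf (Set.Icc t₁ t₂ ∩ v ⁻¹' Set.Ici 0) with hτdef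
  have hτK : τ ∈ Set.Icc t₁ t₂ ∩ v ⁻¹' Set.Ici 0 := hKclosed.csInf_mem hKne hKbdd
  have hτ2 : τ ≤ t₂ := hτK.1.2
  have hτ1' : t₁ ≤ τ := hτK.1.1
  have hbefore : ∀ t, t₁ ≤ t → t < τ → v t < 0 := by
    intro t ht1 htτ
    by_contra h; push_neg at h
    exact absurd (csInf_le hKbdd ⟨⟨ht1, htτ.le.trans hτ2⟩, h⟩) (not_le.2 htτ)
  have hτ1 : t₁ < τ := hτ1'.lt_of_ne fun h => by
    have := hτK.2; rw [← h] at this; exact absurd this (not_le.2 h1)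
  have hτ0 : v τ = 0 := by
    refine le_antisymm ?_ hτK.2
    have hcτ : Tendsto v (𝓝[<] τ) (𝓝 (v τ)) :=
      ((hc τ (lt_of_le_of_lt hτ2 h2)).tendsto).mono_left nhdsWithin_le_nhds
    refine le_of_tendsto hcτ ?_
    filter_upwards [Ioo_mem_nhdsLT_of_mem (Set.mem_Ioc.2 ⟨hτ1, le_rfl⟩)] with s hs
    exact (hbefore s hs.1.le hs.2).le
  exact ⟨τ, hτ1, hτ2, hτ0, hbefore⟩

lemma aux_last_zero {v : ℝ → ℝ} {tmax s₀ t₁ : ℝ} (hc : ∀ t < tmax, ContinuousAt v t)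
    (h1 : t₁ < tmax) (hneg : v t₁ < 0) (hs₀ : s₀ ≤ t₁) (hv0 : 0 ≤ v s₀) :
    ∃ σ, σ < t₁ ∧ v σ = 0 ∧ ∀ t, σ < t → t ≤ t₁ → v t < 0 := by
  have hKclosed : IsClosed (Set.Icc s₀ t₁ ∩ v ⁻¹' Set.Ici 0) :=
    ContinuousOn.preimage_isClosed_of_isClosed
      (fun x hx => (hc x (lt_of_le_of_lt hx.2 h1)).continuousWithinAt) isClosed_Icc isClosed_Ici
  have hKne : (Set.Icc s₀ t₁ ∩ v ⁻¹' Set.Ici 0).Nonempty := ⟨s₀, ⟨le_rfl, hs₀⟩, hv0⟩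
  have hKbdd : BddAbove (Set.Icc s₀ t₁ ∩ v ⁻¹' Set.Ici 0) := ⟨t₁, fun x hx => hx.1.2⟩
  set σ := sSup (Set.Icc s₀ t₁ ∩ v ⁻¹' Set.Ici 0) with hσdef
  have hσK : σ ∈ Set.Icc s₀ t₁ ∩ v ⁻¹' Set.Ici 0 := hKclosed.csSup_mem hKne hKbdd
  have hσ1' : σ ≤ t₁ := hσK.1.2
  have hafter : ∀ t, σ < t → t ≤ t₁ → v t < 0 := by
    intro t htσ ht1
    by_contra h; push_neg at h
    exact absurd (le_csSup hKbdd ⟨⟨(hσK.1.1).trans htσ.le, ht1⟩, h⟩) (not_le.2 htσ)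
  have hσ1 : σ < t₁ := hσ1'.lt_of_ne fun h => by
    have := hσK.2; rw [h] at this; exact absurd this (not_le.2 hneg)
  have hσ0 : v σ = 0 := by
    refine le_antisymm ?_ hσK.2
    have hcσ : Tendsto v (𝓝[>] σ) (𝓝 (v σ)) :=
      ((hc σ (lt_of_le_of_lt hσ1' h1)).tendsto).mono_left nhdsWithin_le_nhds
    refine le_of_tendsto hcσ ?_
    filter_upwards [Ioo_mem_nhdsGT_of_mem (Set.left_mem_Ico.2 hσ1)] with s hs
    exact (hafter s hs.1 hs.2.le).le
  exact ⟨σ, hσ1, hσ0, hafter⟩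

lemma aux_ftc {f : ℝ → ℝ} {tmax : ℝ} (hc : ∀ t < tmax, ContinuousAt f t) {a t : ℝ}
    (ha : a < tmax) (ht : t < tmax) :
    HasDerivAt (fun u => ∫ s in a..u, f s) (f t) t := by
  apply intervalIntegral.integral_hasDerivAt_right
  · apply ContinuousOn.intervalIntegrable
    intro s hs
    exact (hc s (lt_of_le_of_lt hs.2 (sup_lt_iff.2 ⟨ha, ht⟩))).continuousWithinAt
  · exact ContinuousOn.stronglyMeasurableAtFilter isOpen_Iio
      (fun s hs => (hc s hs).continuousWithinAt) t ht
  · exact hc t ht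


set_option maxHeartbeats 1000000

/-- Under the hypotheses of the first-integral setup, negativity of `X` and of `Z − X` is
forward invariant; in particular `g(t)` and `W(t)/Y(t)` have limits in `[−∞,+∞]` as
`t → t_max⁻`. -/
theorem stmt14 (d : ℕ) (hd : 2 ≤ d) (q : ℝ) (tmax : ℝ) (X Y Z W g : ℝ → ℝ)
    (hode : StarSystem d q X Y Z W (Set.Iio tmax))
    (hY : ∀ t < tmax, 0 < Y t) (hW : ∀ t < tmax, 0 < W t)
    (hlimX : Tendsto X atBot (𝓝 0)) (hlimY : Tendsto Y atBot (𝓝 0))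
    (hlimZ : Tendsto Z atBot (𝓝 1)) (hlimW : Tendsto W atBot (𝓝 0))
    (t0 g0 : ℝ) (ht0 : t0 < tmax) (hg0 : 0 < g0) (hgt0 : g t0 = g0)
    (hgode : ∀ t < tmax, HasDerivAt g (g t * X t) t)
    (C : ℝ) (hC : 0 < C)
    (hfirst : ∀ t < tmax,
      (d : ℝ) * X t^2 + A2 d * Y t^2 + Z t^2 - A3 d q * W t^2 = 1 - C * (g t * Y t)^2) :
    (∀ t1 < tmax, X t1 < 0 → ∀ t, t1 < t → t < tmax → X t < 0) ∧
    (∀ t1 < tmax, Z t1 - X t1 < 0 → ∀ t, t1 < t → t < tmax → Z t - X t < 0) ∧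
    (∃ l : EReal, Tendsto (fun t => ((g t : ℝ) : EReal))
      (nhdsWithin tmax (Set.Iio tmax)) (𝓝 l)) ∧
    (∃ l : EReal, Tendsto (fun t => ((W t / Y t : ℝ) : EReal))
      (nhdsWithin tmax (Set.Iio tmax)) (𝓝 l)) := by
  have hd2 : (2:ℝ) ≤ (d:ℝ) := by exact_mod_cast hd
  have hd0 : (0:ℝ) < (d:ℝ) := by linarith
  have hdne : (d:ℝ) ≠ 0 := ne_of_gt hd0
  have hA2pos : 0 < A2 d := by unfold A2; nlinarith
  have hA3nn : 0 ≤ A3 d q := by unfold A3; positivity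
  -- continuity of the components
  have hXc : ∀ t < tmax, ContinuousAt X t := fun t ht => ((hode t ht).1).continuousAt
  have hYc : ∀ t < tmax, ContinuousAt Y t := fun t ht => ((hode t ht).2.1).continuousAt
  have hZc : ∀ t < tmax, ContinuousAt Z t := fun t ht => ((hode t ht).2.2.1).continuousAt
  have hWc : ∀ t < tmax, ContinuousAt W t := fun t ht => ((hode t ht).2.2.2).continuousAt
  have huc : ∀ t < tmax, ContinuousAt (fun s => Z s - X s) t :=
    fun t ht => (hZc t ht).sub (hXc t ht)
  -- the integrating-factor weight
  set w : ℝ → ℝ := fun s => 2 * ((d:ℝ) * X s^2 + Z s^2 - X s) with hwdef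
  have hwc : ∀ t < tmax, ContinuousAt w t := by
    intro t ht
    exact (((((hXc t ht).pow 2).const_mul ((d:ℝ))).add ((hZc t ht).pow 2)).sub
      (hXc t ht)).const_mul 2
  -- derivative of u = Z - X
  have hu' : ∀ t < tmax, HasDerivAt (fun s => Z s - X s)
      ((Z t - X t) * ((d:ℝ) * X t^2 + Z t^2 - 1)
        + (((d:ℝ)+2) * A3 d q * W t^2 - A2 d * Y t^2) / (d:ℝ)) t := by
    intro t ht
    obtain ⟨hX', _, hZ', _⟩ := hode t ht
    refine (hZ'.sub hX').congr_deriv ?_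
    field_simp
    ring
  -- derivative of P = (d+2)A₃W² - A₂Y²
  have hPder : ∀ t < tmax, HasDerivAt (fun s => ((d:ℝ)+2) * A3 d q * W s^2 - A2 d * Y s^2)
      (w t * (((d:ℝ)+2) * A3 d q * W t^2 - A2 d * Y t^2)
        + 2 * ((d:ℝ)+2) * A3 d q * W t^2 * (Z t - X t)) t := by
    intro t ht
    obtain ⟨_, hY', _, hW'⟩ := hode t ht
    have h1 := ((hW'.pow 2).const_mul (((d:ℝ)+2) * A3 d q)).sub ((hY'.pow 2).const_mul (A2 d))
    refine h1.congr_deriv ?_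
    simp only [hwdef]
    push_cast
    ring
  -- derivative of R = A₂Y² - 2A₃W²
  have hRder : ∀ t < tmax, HasDerivAt (fun s => A2 d * Y s^2 - 2 * A3 d q * W s^2)
      (w t * (A2 d * Y t^2 - 2 * A3 d q * W t^2)
        + -(4 * A3 d q * W t^2 * (Z t - X t))) t := by
    intro t ht
    obtain ⟨_, hY', _, hW'⟩ := hode t ht
    have h1 := ((hY'.pow 2).const_mul (A2 d)).sub ((hW'.pow 2).const_mul (2 * A3 d q))
    refine h1.congr_deriv ?_
    simp only [hwdef]
    push_cast
    ring
  -- the two key integrating-factor comparison results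
  have keyW : ∀ (c c' : ℝ → ℝ), (∀ t, t < tmax → HasDerivAt c (w t * c t + c' t) t) →
      ∀ a b, a < b → b < tmax → (∀ s, a < s → s < b → c' s ≤ 0) →
      c b * Real.exp (-(∫ r in a..b, w r)) ≤ c a := by
    intro c c' hcder a b hab hb hc'
    have hamax : a < tmax := hab.trans hb
    have hF' : ∀ t, t < tmax → HasDerivAt (fun s => c s * Real.exp (-(∫ r in a..s, w r)))
        (c' t * Real.exp (-(∫ r in a..t, w r))) t := by
      intro t ht
      have hh : HasDerivAt (fun s => ∫ r in a..s, w r) (w t) t := aux_ftc hwc hamax ht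
      have he : HasDerivAt (fun s => Real.exp (-(∫ r in a..s, w r)))
          (Real.exp (-(∫ r in a..t, w r)) * -(w t)) t := (hh.neg).exp
      have := (hcder t ht).mul he
      refine this.congr_deriv ?_
      ring
    have hanti : AntitoneOn (fun s => c s * Real.exp (-(∫ r in a..s, w r))) (Set.Icc a b) := by
      apply antitoneOn_of_deriv_nonpos (convex_Icc a b)
      · exact fun s hs => (hF' s (lt_of_le_of_lt hs.2 hb)).continuousAt.continuousWithinAt
      · intro s hs
        rw [interior_Icc] at hs
        exact ((hF' s (hs.2.trans hb)).differentiableAt).differentiableWithinAt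
      · intro s hs
        rw [interior_Icc] at hs
        rw [(hF' s (hs.2.trans hb)).deriv]
        exact mul_nonpos_iff.2 (Or.inr ⟨hc' s hs.1 hs.2, (Real.exp_pos _).le⟩)
    have h2 := hanti (Set.left_mem_Icc.2 hab.le) (Set.right_mem_Icc.2 hab.le) hab.le
    simpa [intervalIntegral.integral_same] using h2
  have keyS : ∀ (c c' : ℝ → ℝ), (∀ t, t < tmax → HasDerivAt c (w t * c t + c' t) t) →
      ∀ a b, a < b → b < tmax → (∀ s, a < s → s < b → c' s < 0) →
      c b * Real.exp (-(∫ r in a..b, w r)) < c a := by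
    intro c c' hcder a b hab hb hc'
    have hamax : a < tmax := hab.trans hb
    have hF' : ∀ t, t < tmax → HasDerivAt (fun s => c s * Real.exp (-(∫ r in a..s, w r)))
        (c' t * Real.exp (-(∫ r in a..t, w r))) t := by
      intro t ht
      have hh : HasDerivAt (fun s => ∫ r in a..s, w r) (w t) t := aux_ftc hwc hamax ht
      have he : HasDerivAt (fun s => Real.exp (-(∫ r in a..s, w r)))
          (Real.exp (-(∫ r in a..t, w r)) * -(w t)) t := (hh.neg).exp
      have := (hcder t ht).mul he
      refine this.congr_deriv ?_
      ring
    have hanti : StrictAntiOn (fun s => c s * Real.exp (-(∫ r in a..s, w r))) (Set.Icc a b) := by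
      apply strictAntiOn_of_deriv_neg (convex_Icc a b)
      · exact fun s hs => (hF' s (lt_of_le_of_lt hs.2 hb)).continuousAt.continuousWithinAt
      · intro s hs
        rw [interior_Icc] at hs
        rw [(hF' s (hs.2.trans hb)).deriv]
        exact mul_neg_of_neg_of_pos (hc' s hs.1 hs.2) (Real.exp_pos _)
    have h2 := hanti (Set.left_mem_Icc.2 hab.le) (Set.right_mem_Icc.2 hab.le) hab
    simpa [intervalIntegral.integral_same] using h2
  -- eventually u ≥ 0 at -∞
  have hubot : ∀ᶠ t in atBot, 0 ≤ Z t - X t := by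
    have h : Tendsto (fun t => Z t - X t) atBot (𝓝 1) := by
      simpa using hlimZ.sub hlimX
    exact h.eventually (eventually_ge_nhds (by norm_num : (0:ℝ) < 1))
  ------------------------------------------------------------------
  -- PART 2 : Z - X < 0 is forward invariant
  ------------------------------------------------------------------
  have hpart2 : ∀ t1, t1 < tmax → Z t1 - X t1 < 0 → ∀ t, t1 < t → t < tmax → Z t - X t < 0 := by
    intro t1 h1 hu1 t2 h12 h2
    by_contra hge; push_neg at hge
    obtain ⟨τ, hτ1, hτ2, hτ0, hτneg⟩ := aux_first_zero huc h12 h2 hu1 hge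
    have hτmax : τ < tmax := lt_of_le_of_lt hτ2 h2
    obtain ⟨s₀, hs₀u, hs₀le⟩ := (hubot.and (eventually_le_atBot t1)).exists
    obtain ⟨σ, hσ1, hσ0, hσneg⟩ := aux_last_zero huc h1 hu1 hs₀le hs₀u
    have hσmax : σ < tmax := hσ1.trans h1
    have hστ : σ < τ := hσ1.trans hτ1
    have huneg : ∀ t, σ < t → t < τ → Z t - X t < 0 := by
      intro t hta htb
      rcases le_or_gt t t1 with h | h
      · exact hσneg t hta h
      · exact hτneg t h.le htb
    -- P τ ≥ 0 from u'(τ) ≥ 0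
    have hPτ : 0 ≤ ((d:ℝ)+2) * A3 d q * W τ^2 - A2 d * Y τ^2 := by
      have hs := aux_slope_left hστ (hu' τ hτmax) hτ0 (fun t ht => huneg t ht.1 ht.2)
      rw [hτ0, zero_mul, zero_add] at hs
      have h2' := mul_nonneg hs hd0.le
      rwa [div_mul_cancel₀ _ hdne] at h2'
    -- hence A₃ > 0
    have hA3pos : 0 < A3 d q := by
      rcases hA3nn.eq_or_lt with h0 | h; swap
      · exact h
      exfalso
      have := mul_pos hA2pos (pow_pos (hY τ hτmax) 2)
      rw [← h0] at hPτ
      nlinarith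
    -- P σ ≤ 0 from u'(σ) ≤ 0
    have hPσ : ((d:ℝ)+2) * A3 d q * W σ^2 - A2 d * Y σ^2 ≤ 0 := by
      have hs := aux_slope_right hστ (hu' σ hσmax) hσ0 (fun t ht => huneg t ht.1 ht.2)
      rw [hσ0, zero_mul, zero_add] at hs
      have h2' := mul_nonpos_iff.2 (Or.inr ⟨hs, hd0.le⟩)
      rwa [div_mul_cancel₀ _ hdne] at h2'
    -- strict decay of P e^{-h}
    have hk := keyS (fun s => ((d:ℝ)+2) * A3 d q * W s^2 - A2 d * Y s^2)
      (fun s => 2 * ((d:ℝ)+2) * A3 d q * W s^2 * (Z s - X s)) hPder σ τ hστ hτmax ?_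
    · have hexp := Real.exp_pos (-(∫ r in σ..τ, w r))
      nlinarith [mul_nonneg hPτ hexp.le]
    · intro s hsa hsb
      show 2 * ((d:ℝ)+2) * A3 d q * W s ^ 2 * (Z s - X s) < 0
      have hsm : s < tmax := hsb.trans hτmax
      have hu := huneg s hsa hsb
      have hw2 := pow_pos (hW s hsm) 2
      have hpos : 0 < 2 * ((d:ℝ)+2) * A3 d q * W s ^ 2 :=
        mul_pos (mul_pos (mul_pos two_pos (by linarith : (0:ℝ) < (d:ℝ)+2)) hA3pos) hw2
      exact mul_neg_of_pos_of_neg hpos hu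
  ------------------------------------------------------------------
  -- trichotomy for the sign of u
  ------------------------------------------------------------------
  have htri : (∀ t, t < tmax → 0 ≤ Z t - X t) ∨
      ∃ σu, σu < tmax ∧ Z σu - X σu = 0 ∧ (∀ t, t ≤ σu → 0 ≤ Z t - X t) ∧
        (∀ t, σu < t → t < tmax → Z t - X t < 0) := by
    by_cases hall : ∀ t, t < tmax → 0 ≤ Z t - X t
    · exact Or.inl hall
    · right
      push_neg at hall
      obtain ⟨τ0, hτ0max, hτ0neg⟩ := hall
      obtain ⟨s₀, hs₀u, hs₀le⟩ := (hubot.and (eventually_le_atBot τ0)).exists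
      obtain ⟨σu, hσu1, hσu0, hσuneg⟩ := aux_last_zero huc hτ0max hτ0neg hs₀le hs₀u
      have hσumax : σu < tmax := hσu1.trans hτ0max
      refine ⟨σu, hσumax, hσu0, ?_, ?_⟩
      · intro t htle
        by_contra h; push_neg at h
        rcases htle.eq_or_lt with rfl | hlt
        · rw [hσu0] at h; exact lt_irrefl 0 h
        · have := hpart2 t (hlt.trans hσumax) h σu hlt hσumax
          rw [hσu0] at this; exact lt_irrefl 0 this
      · intro t hta htb
        rcases le_or_gt t τ0 with h | h
        · exact hσuneg t hta h
        · exact hpart2 τ0 hτ0max hτ0neg t h htb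
  ------------------------------------------------------------------
  -- u < 0 implies P < 0
  ------------------------------------------------------------------
  have hPneg : ∀ t, t < tmax → Z t - X t < 0 →
      ((d:ℝ)+2) * A3 d q * W t^2 - A2 d * Y t^2 < 0 := by
    intro t ht hu
    rcases htri with hall | ⟨σu, hσumax, hσu0, hbefore, hafter⟩
    · exact absurd (hall t ht) (by linarith)
    · have hσut : σu < t := by
        by_contra h; push_neg at h
        linarith [hbefore t h]
      rcases hA3nn.eq_or_lt with h0 | hA3pos
      · have := mul_pos hA2pos (pow_pos (hY t ht) 2)
        rw [← h0]; nlinarith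
      · have hPσu : ((d:ℝ)+2) * A3 d q * W σu^2 - A2 d * Y σu^2 ≤ 0 := by
          have hs := aux_slope_right hσut (hu' σu hσumax) hσu0
            (fun s hs => hafter s hs.1 (hs.2.trans ht))
          rw [hσu0, zero_mul, zero_add] at hs
          have h2' := mul_nonpos_iff.2 (Or.inr ⟨hs, hd0.le⟩)
          rwa [div_mul_cancel₀ _ hdne] at h2'
        have hk := keyS (fun s => ((d:ℝ)+2) * A3 d q * W s^2 - A2 d * Y s^2)
          (fun s => 2 * ((d:ℝ)+2) * A3 d q * W s^2 * (Z s - X s)) hPder σu t hσut ht ?_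
        · by_contra hge; push_neg at hge
          have hexp := Real.exp_pos (-(∫ r in σu..t, w r))
          nlinarith [mul_nonneg hge hexp.le]
        · intro s hsa hsb
          show 2 * ((d:ℝ)+2) * A3 d q * W s ^ 2 * (Z s - X s) < 0
          have hsm : s < tmax := hsb.trans ht
          have hu := hafter s hsa hsm
          have hw2 := pow_pos (hW s hsm) 2
          have hpos : 0 < 2 * ((d:ℝ)+2) * A3 d q * W s ^ 2 :=
            mul_pos (mul_pos (mul_pos two_pos (by linarith : (0:ℝ) < (d:ℝ)+2)) hA3pos) hw2
          exact mul_neg_of_pos_of_neg hpos hu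
  ------------------------------------------------------------------
  -- the first-integral inequality : R ≥ 0 → S - 1 < 0
  ------------------------------------------------------------------
  have hS1 : ∀ t, t < tmax → 0 ≤ A2 d * Y t^2 - 2 * A3 d q * W t^2 →
      (d:ℝ) * X t^2 + Z t^2 - 1 < 0 := by
    intro t ht hR
    have h := hfirst t ht
    have hy := mul_pos hA2pos (pow_pos (hY t ht) 2)
    have hc2 := mul_nonneg hC.le (sq_nonneg (g t * Y t))
    linarith
  ------------------------------------------------------------------
  -- PART 1 : X < 0 is forward invariant
  ------------------------------------------------------------------
  have hpart1 : ∀ t1, t1 < tmax → X t1 < 0 → ∀ t, t1 < t → t < tmax → X t < 0 := by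
    intro t1 h1 hX1 t2 h12 h2
    by_contra hge; push_neg at hge
    obtain ⟨τ, hτ1, hτ2, hτ0, hτneg⟩ := aux_first_zero hXc h12 h2 hX1 hge
    have hτmax : τ < tmax := lt_of_le_of_lt hτ2 h2
    -- R τ ≥ 0 from X'(τ) ≥ 0
    have hRτ : 0 ≤ A2 d * Y τ^2 - 2 * A3 d q * W τ^2 := by
      have hs := aux_slope_left hτ1 (hode τ hτmax).1 hτ0 (fun t ht => hτneg t ht.1.le ht.2)
      rw [hτ0, zero_mul, zero_add] at hs
      have h2' := mul_nonneg hs hd0.le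
      have heq : (A2 d / (d:ℝ) * Y τ^2 - 2 * A3 d q / (d:ℝ) * W τ^2) * (d:ℝ)
          = A2 d * Y τ^2 - 2 * A3 d q * W τ^2 := by
        field_simp
      rwa [heq] at h2'
    -- R ≥ 0 everywhere before τ
    have hR0 : ∀ t, t < τ → 0 ≤ A2 d * Y t^2 - 2 * A3 d q * W t^2 := by
      intro t ht
      have htmax : t < tmax := ht.trans hτmax
      by_cases hut : Z t - X t < 0
      · have hP := hPneg t htmax hut
        nlinarith [mul_nonneg hA3nn (sq_nonneg (W t)), hd2]
      · push_neg at hut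
        rcases htri with hall | ⟨σu, hσumax, hσu0, hbefore, hafter⟩
        · have hk := keyW (fun s => A2 d * Y s^2 - 2 * A3 d q * W s^2)
            (fun s => -(4 * A3 d q * W s^2 * (Z s - X s))) hRder t τ ht hτmax ?_
          · have hexp := Real.exp_pos (-(∫ r in t..τ, w r))
            nlinarith [mul_nonneg hRτ hexp.le]
          · intro s hsa hsb
            show -(4 * A3 d q * W s ^ 2 * (Z s - X s)) ≤ 0
            have hsm : s < tmax := hsb.trans hτmax
            have := hall s hsm
            nlinarith [mul_nonneg hA3nn (sq_nonneg (W s))]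
        · have htσu : t ≤ σu := by
            by_contra hh; push_neg at hh
            linarith [hafter t hh htmax]
          rcases le_or_gt τ σu with hcase | hcase
          · -- u ≥ 0 on (t, τ) since τ ≤ σu
            have hk := keyW (fun s => A2 d * Y s^2 - 2 * A3 d q * W s^2)
              (fun s => -(4 * A3 d q * W s^2 * (Z s - X s))) hRder t τ ht hτmax ?_
            · have hexp := Real.exp_pos (-(∫ r in t..τ, w r))
              nlinarith [mul_nonneg hRτ hexp.le]
            · intro s hsa hsb
              show -(4 * A3 d q * W s ^ 2 * (Z s - X s)) ≤ 0
              have := hbefore s (hsb.le.trans hcase)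
              nlinarith [mul_nonneg hA3nn (sq_nonneg (W s))]
          · -- σu < τ : anchor at σu
            have hPσu : ((d:ℝ)+2) * A3 d q * W σu^2 - A2 d * Y σu^2 ≤ 0 := by
              have hs := aux_slope_right hσumax (hu' σu hσumax) hσu0
                (fun s hs => hafter s hs.1 hs.2)
              rw [hσu0, zero_mul, zero_add] at hs
              have h2' := mul_nonpos_iff.2 (Or.inr ⟨hs, hd0.le⟩)
              rwa [div_mul_cancel₀ _ hdne] at h2'
            have hRσu : 0 ≤ A2 d * Y σu^2 - 2 * A3 d q * W σu^2 := by
              nlinarith [mul_nonneg hA3nn (sq_nonneg (W σu)), hd2]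
            rcases htσu.eq_or_lt with rfl | hlt
            · exact hRσu
            · have hk := keyW (fun s => A2 d * Y s^2 - 2 * A3 d q * W s^2)
                (fun s => -(4 * A3 d q * W s^2 * (Z s - X s))) hRder t σu hlt hσumax ?_
              · have hexp := Real.exp_pos (-(∫ r in t..σu, w r))
                nlinarith [mul_nonneg hRσu hexp.le]
              · intro s hsa hsb
                show -(4 * A3 d q * W s ^ 2 * (Z s - X s)) ≤ 0
                have := hbefore s hsb.le
                nlinarith [mul_nonneg hA3nn (sq_nonneg (W s))]
    -- X is strictly increasing where negative before τ
    have hDX : ∀ t, t < τ → X t < 0 → 0 < deriv X t := by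
      intro t ht hx
      have htmax : t < tmax := ht.trans hτmax
      rw [(hode t htmax).1.deriv]
      have hs := hS1 t htmax (hR0 t ht)
      have hpos := mul_pos_of_neg_of_neg hx hs
      have hquot : 0 ≤ (A2 d * Y t^2 - 2 * A3 d q * W t^2) / (d:ℝ) :=
        div_nonneg (hR0 t ht) hd0.le
      have heq : A2 d / (d:ℝ) * Y t^2 - 2 * A3 d q / (d:ℝ) * W t^2
          = (A2 d * Y t^2 - 2 * A3 d q * W t^2) / (d:ℝ) := by ring
      linarith [heq ▸ hquot]
    by_cases hex : ∃ s, s ≤ t1 ∧ 0 ≤ X s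
    · obtain ⟨s₀, hs₀1, hs₀x⟩ := hex
      obtain ⟨σ, hσ1, hσ0, hσneg⟩ := aux_last_zero hXc h1 hX1 hs₀1 hs₀x
      have hστ : σ < τ := hσ1.trans hτ1
      have hXneg : ∀ t, σ < t → t < τ → X t < 0 := by
        intro t hta htb
        rcases le_or_gt t t1 with h | h
        · exact hσneg t hta h
        · exact hτneg t h.le htb
      have hmono : StrictMonoOn X (Set.Icc σ τ) := by
        apply strictMonoOn_of_deriv_pos (convex_Icc σ τ)
        · exact fun s hs => (hXc s (lt_of_le_of_lt hs.2 hτmax)).continuousWithinAt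
        · intro s hs
          rw [interior_Icc] at hs
          exact hDX s hs.2 (hXneg s hs.1 hs.2)
      have := hmono (Set.left_mem_Icc.2 hστ.le) (Set.right_mem_Icc.2 hστ.le) hστ
      rw [hσ0, hτ0] at this
      exact lt_irrefl 0 this
    · push_neg at hex
      have hXneg : ∀ t, t < τ → X t < 0 := by
        intro t ht
        rcases le_or_gt t t1 with h | h
        · exact hex t h
        · exact hτneg t h.le ht
      have hmono : StrictMonoOn X (Set.Iic τ) := by
        apply strictMonoOn_of_deriv_pos (convex_Iic τ)
        · exact fun s hs => (hXc s (lt_of_le_of_lt hs hτmax)).continuousWithinAt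
        · intro s hs
          rw [interior_Iic] at hs
          exact hDX s hs (hXneg s hs)
      have hle : ∀ᶠ s in atBot, X s ≤ X t1 := by
        rw [eventually_atBot]
        exact ⟨t1 - 1, fun s hs =>
          (hmono (Set.mem_Iic.2 (by linarith [hτ1])) (Set.mem_Iic.2 hτ1.le)
            (by linarith)).le⟩
      have : (0:ℝ) ≤ X t1 := le_of_tendsto hlimX hle
      linarith
  ------------------------------------------------------------------
  -- positivity of g
  ------------------------------------------------------------------
  have hgpos : ∀ t, t < tmax → 0 < g t := by
    have hGd : ∀ t, t < tmax → HasDerivAt (fun u => ∫ s in t0..u, X s) (X t) t :=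
      fun t ht => aux_ftc hXc ht0 ht
    have hNd : ∀ t, t < tmax →
        HasDerivAt (fun s => g s * Real.exp (-(∫ r in t0..s, X r))) 0 t := by
      intro t ht
      have he : HasDerivAt (fun s => Real.exp (-(∫ r in t0..s, X r)))
          (Real.exp (-(∫ r in t0..t, X r)) * -(X t)) t := ((hGd t ht).neg).exp
      have := (hgode t ht).mul he
      refine this.congr_deriv ?_
      ring
    have hcont : ContinuousOn (fun s => g s * Real.exp (-(∫ r in t0..s, X r)))
        (Set.Iio tmax) := fun s hs => (hNd s hs).continuousAt.continuousWithinAt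
    have hdiff : ∀ s ∈ interior (Set.Iio tmax),
        DifferentiableWithinAt ℝ (fun s => g s * Real.exp (-(∫ r in t0..s, X r)))
          (interior (Set.Iio tmax)) s := by
      intro s hs
      rw [interior_Iio] at hs
      exact ((hNd s hs).differentiableAt).differentiableWithinAt
    have hderiv0 : ∀ s ∈ interior (Set.Iio tmax),
        deriv (fun s => g s * Real.exp (-(∫ r in t0..s, X r))) s = 0 := by
      intro s hs
      rw [interior_Iio] at hs
      exact (hNd s hs).deriv
    have hmono := monotoneOn_of_deriv_nonneg (convex_Iio tmax) hcont hdiff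
      (fun s hs => le_of_eq (hderiv0 s hs).symm)
    have hanti := antitoneOn_of_deriv_nonpos (convex_Iio tmax) hcont hdiff
      (fun s hs => le_of_eq (hderiv0 s hs))
    intro t ht
    have hconst : g t * Real.exp (-(∫ r in t0..t, X r))
        = g t0 * Real.exp (-(∫ r in t0..t0, X r)) := by
      rcases le_total t t0 with h | h
      · have ha := hanti (Set.mem_Iio.2 ht) (Set.mem_Iio.2 ht0) h
        have hb := hmono (Set.mem_Iio.2 ht) (Set.mem_Iio.2 ht0) h
        simp only at ha hb
        exact le_antisymm hb ha
      · have ha := hanti (Set.mem_Iio.2 ht0) (Set.mem_Iio.2 ht) h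
        have hb := hmono (Set.mem_Iio.2 ht0) (Set.mem_Iio.2 ht) h
        simp only at ha hb
        exact le_antisymm ha hb
    rw [intervalIntegral.integral_same, neg_zero, Real.exp_zero, mul_one, hgt0] at hconst
    nlinarith [Real.exp_pos (-(∫ r in t0..t, X r))]
  ------------------------------------------------------------------
  -- limits
  ------------------------------------------------------------------
  refine ⟨hpart1, hpart2, ?_, ?_⟩
  · -- limit of g
    rcases em (∃ t1, t1 < tmax ∧ X t1 < 0) with ⟨t1, h1, hx1⟩ | hno
    · have hanti : AntitoneOn g (Set.Ioo t1 tmax) := by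
        apply antitoneOn_of_deriv_nonpos (convex_Ioo t1 tmax)
        · exact fun s hs => ((hgode s hs.2).continuousAt).continuousWithinAt
        · intro s hs
          rw [interior_Ioo] at hs
          exact ((hgode s hs.2).differentiableAt).differentiableWithinAt
        · intro s hs
          rw [interior_Ioo] at hs
          rw [(hgode s hs.2).deriv]
          exact mul_nonpos_iff.2 (Or.inl ⟨(hgpos s hs.2).le,
            (hpart1 t1 h1 hx1 s hs.1 hs.2).le⟩)
      have hanti' : AntitoneOn (fun t => ((g t : ℝ) : EReal)) (Set.Ioo t1 tmax) :=
        fun a ha b hb hab => EReal.coe_le_coe_iff.2 (hanti ha hb hab)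
      exact ⟨_, hanti'.tendsto_nhdsWithin_Ioo_left (Set.nonempty_Ioo.2 h1)
        (OrderBot.bddBelow _)⟩
    · push_neg at hno
      have hmono : MonotoneOn g (Set.Ioo (tmax - 1) tmax) := by
        apply monotoneOn_of_deriv_nonneg (convex_Ioo _ tmax)
        · exact fun s hs => ((hgode s hs.2).continuousAt).continuousWithinAt
        · intro s hs
          rw [interior_Ioo] at hs
          exact ((hgode s hs.2).differentiableAt).differentiableWithinAt
        · intro s hs
          rw [interior_Ioo] at hs
          rw [(hgode s hs.2).deriv]
          exact mul_nonneg (hgpos s hs.2).le (hno s hs.2)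
      have hmono' : MonotoneOn (fun t => ((g t : ℝ) : EReal)) (Set.Ioo (tmax - 1) tmax) :=
        fun a ha b hb hab => EReal.coe_le_coe_iff.2 (hmono ha hb hab)
      exact ⟨_, hmono'.tendsto_nhdsWithin_Ioo_left (Set.nonempty_Ioo.2 (by linarith))
        (OrderTop.bddAbove _)⟩
  · -- limit of W / Y
    have hρd : ∀ t, t < tmax → HasDerivAt (fun s => W s / Y s)
        (W t / Y t * (Z t - X t)) t := by
      intro t ht
      obtain ⟨_, hY', _, hW'⟩ := hode t ht
      have hYne : Y t ≠ 0 := ne_of_gt (hY t ht)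
      have := hW'.div hY' hYne
      refine this.congr_deriv ?_
      field_simp
      ring
    rcases em (∃ t1, t1 < tmax ∧ Z t1 - X t1 < 0) with ⟨t1, h1, hu1⟩ | hno
    · have hanti : AntitoneOn (fun s => W s / Y s) (Set.Ioo t1 tmax) := by
        apply antitoneOn_of_deriv_nonpos (convex_Ioo t1 tmax)
        · exact fun s hs => ((hρd s hs.2).continuousAt).continuousWithinAt
        · intro s hs
          rw [interior_Ioo] at hs
          exact ((hρd s hs.2).differentiableAt).differentiableWithinAt
        · intro s hs
          rw [interior_Ioo] at hs
          rw [(hρd s hs.2).deriv]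
          exact mul_nonpos_iff.2 (Or.inl ⟨div_nonneg (hW s hs.2).le (hY s hs.2).le,
            (hpart2 t1 h1 hu1 s hs.1 hs.2).le⟩)
      have hanti' : AntitoneOn (fun t => ((W t / Y t : ℝ) : EReal)) (Set.Ioo t1 tmax) :=
        fun a ha b hb hab => EReal.coe_le_coe_iff.2 (hanti ha hb hab)
      exact ⟨_, hanti'.tendsto_nhdsWithin_Ioo_left (Set.nonempty_Ioo.2 h1)
        (OrderBot.bddBelow _)⟩
    · push_neg at hno
      have hmono : MonotoneOn (fun s => W s / Y s) (Set.Ioo (tmax - 1) tmax) := by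
        apply monotoneOn_of_deriv_nonneg (convex_Ioo _ tmax)
        · exact fun s hs => ((hρd s hs.2).continuousAt).continuousWithinAt
        · intro s hs
          rw [interior_Ioo] at hs
          exact ((hρd s hs.2).differentiableAt).differentiableWithinAt
        · intro s hs
          rw [interior_Ioo] at hs
          rw [(hρd s hs.2).deriv]
          exact mul_nonneg (div_nonneg (hW s hs.2).le (hY s hs.2).le) (hno s hs.2)
      have hmono' : MonotoneOn (fun t => ((W t / Y t : ℝ) : EReal)) (Set.Ioo (tmax - 1) tmax) :=
        fun a ha b hb hab => EReal.coe_le_coe_iff.2 (hmono ha hb hab)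
      exact ⟨_, hmono'.tendsto_nhdsWithin_Ioo_left (Set.nonempty_Ioo.2 (by linarith))
        (OrderTop.bddAbove _)⟩
end
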